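/- arXiv:1101.5250 — 2 statements merged into one kernel-verified Lean document; each statement's English description precedes it below -/
import Mathlib

section
/- (Strip-decomposition generating function of a pair of broken ribbons) Let λ ⊆ λ⁺ and μ⁻ ⊆ μ be partitions such that λ⁺/λ and μ/μ⁻ are broken ribbons. Then in the polynomial ring ℤ[q]: Σ_{λ',μ'} (−1)^{|μ/μ⁻|} (−q)^{|λ⁺/λ'| + |μ'/μ⁻|} = (−1)^{|μ/μ⁻|} (−q)^{hgt(λ⁺/λ)+wt(μ/μ⁻)} (1−q)^{rib(λ⁺/λ)+rib(μ/μ⁻)}, where the sum on the left runs over all pairs of partitions (λ',μ') with λ ⊆ λ' ⊆ λ⁺ and μ⁻ ⊆ μ' ⊆ μ such that λ'/λ and μ'/μ⁻ are horizontal strips and λ⁺/λ' and μ/μ' are vertical strips. -/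
open scoped Classical

noncomputable section

/-- The cells of the skew diagram `lam / mu`. -/
def skewCells (mu lam : YoungDiagram) : Finset (ℕ × ℕ) := lam.cells \ mu.cells

/-- The size `|lam / mu|` of the skew diagram. -/
def skewSize (mu lam : YoungDiagram) : ℕ := (skewCells mu lam).card

/-- `lam/mu` is a horizontal strip: no vertical domino. -/
def IsHorizontalStrip (mu lam : YoungDiagram) : Prop :=
  ∀ i j : ℕ, ¬((i, j) ∈ skewCells mu lam ∧ (i + 1, j) ∈ skewCells mu lam)

/-- `lam/mu` is a vertical strip: no horizontal domino. -/
def IsVerticalStrip (mu lam : YoungDiagram) : Prop :=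
  ∀ i j : ℕ, ¬((i, j) ∈ skewCells mu lam ∧ (i, j + 1) ∈ skewCells mu lam)

/-- `lam/mu` is a broken ribbon: no 2×2 block. -/
def IsBrokenRibbon (mu lam : YoungDiagram) : Prop :=
  ∀ i j : ℕ, ¬((i, j) ∈ skewCells mu lam ∧ (i, j + 1) ∈ skewCells mu lam ∧
      (i + 1, j) ∈ skewCells mu lam ∧ (i + 1, j + 1) ∈ skewCells mu lam)

/-- Edge-adjacency of lattice cells. -/
def CellAdj (c d : ℕ × ℕ) : Prop :=
  (c.1 = d.1 ∧ (c.2 = d.2 + 1 ∨ d.2 = c.2 + 1)) ∨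
  (c.2 = d.2 ∧ (c.1 = d.1 + 1 ∨ d.1 = c.1 + 1))

/-- The setoid relating cells in the same edge-connected component of `S`. -/
def componentSetoid (S : Finset (ℕ × ℕ)) : Setoid {c : ℕ × ℕ // c ∈ S} :=
  Relation.EqvGen.setoid (fun x y => CellAdj x.1 y.1)

/-- Edge-connected components of a finite set of cells. -/
def SkewComponents (S : Finset (ℕ × ℕ)) : Type := Quotient (componentSetoid S)

/-- The number of edge-connected components of `S`. -/
def ribSet (S : Finset (ℕ × ℕ)) : ℕ := Nat.card (SkewComponents S)

/-- Pairs (component of `S`, index of a nonempty row of that component). -/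
def componentRowPairs (S : Finset (ℕ × ℕ)) : Type :=
  {p : SkewComponents S × ℕ //
    ∃ c : {c : ℕ × ℕ // c ∈ S}, Quotient.mk (componentSetoid S) c = p.1 ∧ c.1.1 = p.2}

/-- Pairs (component of `S`, index of a nonempty column of that component). -/
def componentColPairs (S : Finset (ℕ × ℕ)) : Type :=
  {p : SkewComponents S × ℕ //
    ∃ c : {c : ℕ × ℕ // c ∈ S}, Quotient.mk (componentSetoid S) c = p.1 ∧ c.1.2 = p.2}

/-- Sum over components of (number of nonempty rows − 1). -/
def hgtSet (S : Finset (ℕ × ℕ)) : ℕ := Nat.card (componentRowPairs S) - ribSet S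

/-- Sum over components of (number of nonempty columns − 1). -/
def wtSet (S : Finset (ℕ × ℕ)) : ℕ := Nat.card (componentColPairs S) - ribSet S

/-- rib(lam/mu): number of ribbon components of the broken ribbon `lam/mu`. -/
def rib (mu lam : YoungDiagram) : ℕ := ribSet (skewCells mu lam)

/-- hgt(lam/mu). -/
def hgt (mu lam : YoungDiagram) : ℕ := hgtSet (skewCells mu lam)

/-- wt(lam/mu). -/
def wt (mu lam : YoungDiagram) : ℕ := wtSet (skewCells mu lam)

/-- `lam/mu` is a ribbon: nonempty, no 2×2 block, and edge-connected. -/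
def IsRibbon (mu lam : YoungDiagram) : Prop :=
  0 < skewSize mu lam ∧ IsBrokenRibbon mu lam ∧ rib mu lam = 1

/-- A semistandard Young tableau of skew shape `lam/mu`: a filling of the skew cells
with positive integers, weakly increasing along rows, strictly increasing down columns
(and `0`, i.e. no entry, outside the skew cells). -/
structure SkewSSYT (mu lam : YoungDiagram) where
  entry : ℕ × ℕ → ℕ
  zeros : ∀ c, c ∉ skewCells mu lam → entry c = 0
  pos : ∀ c ∈ skewCells mu lam, 1 ≤ entry c
  rowWeak : ∀ i j, (i, j) ∈ skewCells mu lam → (i, j + 1) ∈ skewCells mu lam →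
    entry (i, j) ≤ entry (i, j + 1)
  colStrict : ∀ i j, (i, j) ∈ skewCells mu lam → (i + 1, j) ∈ skewCells mu lam →
    entry (i, j) < entry (i + 1, j)

/-- The number of cells of the tableau `T` with entry `v`. -/
def countEntry {mu lam : YoungDiagram} (T : SkewSSYT mu lam) (v : ℕ) : ℕ :=
  ((skewCells mu lam).filter (fun c => T.entry c = v)).card

/-- The skew Schur function `s_{lam/mu}`, as a formal power series in variables
`x_1, x_2, …` (variable index `n : ℕ` standing for `x_{n+1}`): the coefficient of
`x_1^(d 0) x_2^(d 1) ⋯` is the number of SSYT of shape `lam/mu` in which entry `i`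
occurs exactly `d (i-1)` times. -/
def skewSchur (R : Type*) [CommRing R] (mu lam : YoungDiagram) : MvPowerSeries ℕ R :=
  fun d => (Nat.card {T : SkewSSYT mu lam // ∀ n : ℕ, countEntry T (n + 1) = d n} : R)

/-- The power sum symmetric function `p_r = x_1^r + x_2^r + ⋯`. -/
def powerSum (R : Type*) [CommRing R] (r : ℕ) : MvPowerSeries ℕ R :=
  fun d => if ∃ n : ℕ, d = Finsupp.single n r then 1 else 0

/-- The quantum power sum `℘_r = ∑_{τ ⊢ r} (-1)^{ℓ(τ)-1} (q-1)^{ℓ(τ)-1} m_τ`,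
written coefficientwise: the coefficient at a monomial with exponent vector `d`
of total degree `r` is `(-1)^{ℓ-1} (q-1)^{ℓ-1}` where `ℓ` is the number of
variables occurring in the monomial. -/
def qps (r : ℕ) : MvPowerSeries ℕ (Polynomial ℤ) :=
  fun d => if (d.sum fun _ v => v) = r then
      (-1 : Polynomial ℤ) ^ (d.support.card - 1) * (Polynomial.X - 1) ^ (d.support.card - 1)
    else 0

/-- The second quantum power sum `p̄_r = ∑_{τ ⊢ r} q^{r-ℓ(τ)} (q-1)^{ℓ(τ)-1} m_τ`. -/
def qps2 (r : ℕ) : MvPowerSeries ℕ (Polynomial ℤ) :=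
  fun d => if (d.sum fun _ v => v) = r then
      (Polynomial.X : Polynomial ℤ) ^ (r - d.support.card) *
        (Polynomial.X - 1) ^ (d.support.card - 1)
    else 0

/-- The one-row Young diagram `(r)`. -/
def rowDiagram (r : ℕ) : YoungDiagram := YoungDiagram.ofRowLens [r] (List.sortedGE_iff_pairwise.mpr (List.pairwise_singleton _ r))

/-- The one-column Young diagram `(1^r)`. -/
def colDiagram (r : ℕ) : YoungDiagram := (rowDiagram r).transpose

theorem sorted_replicate_one (m : ℕ) : List.Pairwise (· ≥ ·) (List.replicate m (1 : ℕ)) := by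
  induction m with
  | zero => simp
  | succ n ih =>
    rw [List.replicate_succ, List.pairwise_cons]
    exact ⟨fun b hb => le_of_eq (List.eq_of_mem_replicate hb), ih⟩

/-- The hook Young diagram `(a+1, 1^m)`. -/
def hookDiagram' (a m : ℕ) : YoungDiagram :=
  YoungDiagram.ofRowLens ((a + 1) :: List.replicate m 1) (by
    rw [List.sortedGE_iff_pairwise, List.pairwise_cons]
    exact ⟨fun b hb => le_trans (le_of_eq (List.eq_of_mem_replicate hb)) (Nat.le_add_left 1 a),
      sorted_replicate_one m⟩)

namespace StripThm

open Finset Polynomial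

lemma mem_skew {lam lp : YoungDiagram} {c : ℕ × ℕ} :
    c ∈ skewCells lam lp ↔ c ∈ lp ∧ c ∉ lam := by
  simp [skewCells, Finset.mem_sdiff, YoungDiagram.mem_cells]

lemma skew_row {lam lp : YoungDiagram} {i j k j' : ℕ} (hc : (i, j) ∈ skewCells lam lp)
    (hd : (i, j') ∈ skewCells lam lp) (h1 : j ≤ k) (h2 : k ≤ j') :
    (i, k) ∈ skewCells lam lp := by
  rw [mem_skew] at *
  exact ⟨lp.up_left_mem le_rfl h2 hd.1, fun hk => hc.2 (lam.up_left_mem le_rfl h1 hk)⟩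

lemma skew_col {lam lp : YoungDiagram} {i j k i' : ℕ} (hc : (i, j) ∈ skewCells lam lp)
    (hd : (i', j) ∈ skewCells lam lp) (h1 : i ≤ k) (h2 : k ≤ i') :
    (k, j) ∈ skewCells lam lp := by
  rw [mem_skew] at *
  exact ⟨lp.up_left_mem h2 le_rfl hd.1, fun hk => hc.2 (lam.up_left_mem h1 le_rfl hk)⟩

lemma noL {lam lp : YoungDiagram} (hbr : IsBrokenRibbon lam lp) {i j : ℕ}
    (h1 : (i, j) ∈ skewCells lam lp) (h2 : (i + 1, j) ∈ skewCells lam lp)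
    (h3 : (i + 1, j + 1) ∈ skewCells lam lp) : False := by
  have h4 : (i, j + 1) ∈ skewCells lam lp := by
    rw [mem_skew] at *
    exact ⟨lp.up_left_mem (Nat.le_succ i) le_rfl h3.1,
      fun hk => h1.2 (lam.up_left_mem le_rfl (Nat.le_succ j) hk)⟩
  exact hbr i j ⟨h1, h4, h2, h3⟩

def endCell (S : Finset (ℕ × ℕ)) (c : ℕ × ℕ) : ℕ × ℕ :=
  if h1 : (c.1, c.2 + 1) ∈ S then endCell S (c.1, c.2 + 1)
  else if h2 : 0 < c.1 ∧ (c.1 - 1, c.2) ∈ S then endCell S (c.1 - 1, c.2)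
  else c
termination_by (S.sup Prod.snd + 1) * c.1 + (S.sup Prod.snd - c.2)
decreasing_by
  · have hle : c.2 + 1 ≤ S.sup Prod.snd := Finset.le_sup (f := Prod.snd) h1
    generalize (S.sup Prod.snd + 1) * c.1 = m
    omega
  · obtain ⟨hpos, _⟩ := h2
    have key : (S.sup Prod.snd + 1) * (c.1 - 1) + (S.sup Prod.snd + 1)
        = (S.sup Prod.snd + 1) * c.1 := by
      rw [← Nat.mul_succ]; congr 1; omega
    generalize hm1 : (S.sup Prod.snd + 1) * (c.1 - 1) = m1 at key
    generalize hm2 : (S.sup Prod.snd + 1) * c.1 = m2 at key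
    omega

lemma endCell_def (S : Finset (ℕ × ℕ)) (c : ℕ × ℕ) : endCell S c =
    if (c.1, c.2 + 1) ∈ S then endCell S (c.1, c.2 + 1)
    else if 0 < c.1 ∧ (c.1 - 1, c.2) ∈ S then endCell S (c.1 - 1, c.2)
    else c := by
  rw [endCell]
  by_cases h1 : (c.1, c.2 + 1) ∈ S <;> by_cases h2 : 0 < c.1 ∧ (c.1 - 1, c.2) ∈ S <;>
    simp [h1, h2]

lemma endCell_mem {S : Finset (ℕ × ℕ)} {c : ℕ × ℕ} (hc : c ∈ S) : endCell S c ∈ S := by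
  induction c using endCell.induct S with
  | case1 c h1 ih => rw [endCell_def]; simp only [h1, if_true]; exact ih h1
  | case2 c h1 h2 ih =>
    rw [endCell_def]; simp only [h1, if_false, h2, if_true]; exact ih h2.2
  | case3 c h1 h2 =>
    rw [endCell_def]; simp only [h1, if_false, h2]; exact hc

lemma endCell_fix {S : Finset (ℕ × ℕ)} {c : ℕ × ℕ} (h1 : (c.1, c.2 + 1) ∉ S)
    (h2 : ¬(0 < c.1 ∧ (c.1 - 1, c.2) ∈ S)) : endCell S c = c := by
  rw [endCell_def]; simp [h1, h2]

lemma endCell_spec (S : Finset (ℕ × ℕ)) (c : ℕ × ℕ) :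
    ((endCell S c).1, (endCell S c).2 + 1) ∉ S ∧
    ¬(0 < (endCell S c).1 ∧ ((endCell S c).1 - 1, (endCell S c).2) ∈ S) := by
  induction c using endCell.induct S with
  | case1 c h1 ih => rw [endCell_def]; simp only [h1, if_true]; exact ih
  | case2 c h1 h2 ih => rw [endCell_def]; simp only [h1, if_false, h2, if_true]; exact ih
  | case3 c h1 h2 => rw [endCell_fix h1 h2]; exact ⟨h1, h2⟩

/-- `Quotient.mk` into components, with a membership proof. -/
def mkC (S : Finset (ℕ × ℕ)) (c : ℕ × ℕ) (hc : c ∈ S) : SkewComponents S :=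
  Quotient.mk (componentSetoid S) ⟨c, hc⟩

lemma mkC_congr {S : Finset (ℕ × ℕ)} {c d : ℕ × ℕ} (h : c = d) {hc : c ∈ S} {hd : d ∈ S} :
    mkC S c hc = mkC S d hd := by subst h; rfl

lemma mk_adj {S : Finset (ℕ × ℕ)} {c d : ℕ × ℕ} (hc : c ∈ S) (hd : d ∈ S)
    (h : CellAdj c d) : mkC S c hc = mkC S d hd :=
  Quotient.sound (Relation.EqvGen.rel _ _ h)

lemma adj_right {c : ℕ × ℕ} : CellAdj c (c.1, c.2 + 1) := Or.inl ⟨rfl, Or.inr rfl⟩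

lemma adj_up {c : ℕ × ℕ} (h : 0 < c.1) : CellAdj c (c.1 - 1, c.2) :=
  Or.inr ⟨rfl, Or.inl (by omega)⟩

lemma endCell_mk {S : Finset (ℕ × ℕ)} {c : ℕ × ℕ} (hc : c ∈ S) :
    mkC S c hc = mkC S (endCell S c) (endCell_mem hc) := by
  induction c using endCell.induct S with
  | case1 c h1 ih =>
    have he : endCell S c = endCell S (c.1, c.2 + 1) := by
      rw [endCell_def]; simp [h1]
    exact ((mk_adj hc h1 adj_right).trans (ih h1)).trans (mkC_congr he.symm)
  | case2 c h1 h2 ih =>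
    have he : endCell S c = endCell S (c.1 - 1, c.2) := by
      rw [endCell_def]; simp [h1, h2]
    exact ((mk_adj hc h2.2 (adj_up h2.1)).trans (ih h2.2)).trans (mkC_congr he.symm)
  | case3 c h1 h2 => exact mkC_congr (endCell_fix h1 h2).symm

section Sets

variable (lam lp : YoungDiagram)

def Hs : Finset (ℕ × ℕ) :=
  (skewCells lam lp).filter fun c => (c.1, c.2 + 1) ∈ skewCells lam lp

def Vs : Finset (ℕ × ℕ) :=
  (skewCells lam lp).filter fun c => 0 < c.1 ∧ (c.1 - 1, c.2) ∈ skewCells lam lp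

def Fs : Finset (ℕ × ℕ) := (skewCells lam lp \ Hs lam lp) \ Vs lam lp

end Sets

variable {lam lp : YoungDiagram}

lemma mem_Hs {c : ℕ × ℕ} :
    c ∈ Hs lam lp ↔ c ∈ skewCells lam lp ∧ (c.1, c.2 + 1) ∈ skewCells lam lp :=
  Finset.mem_filter

lemma mem_Vs {c : ℕ × ℕ} :
    c ∈ Vs lam lp ↔ c ∈ skewCells lam lp ∧ (0 < c.1 ∧ (c.1 - 1, c.2) ∈ skewCells lam lp) :=
  Finset.mem_filter

lemma mem_Fs {c : ℕ × ℕ} :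
    c ∈ Fs lam lp ↔ c ∈ skewCells lam lp ∧ (c.1, c.2 + 1) ∉ skewCells lam lp ∧
      ¬(0 < c.1 ∧ (c.1 - 1, c.2) ∈ skewCells lam lp) := by
  simp only [Fs, Finset.mem_sdiff, mem_Hs, mem_Vs]; tauto

lemma mem_Fs' {c : ℕ × ℕ} :
    c ∈ Fs lam lp ↔ c ∈ skewCells lam lp ∧ c ∉ Hs lam lp ∧ c ∉ Vs lam lp := by
  simp only [Fs, Finset.mem_sdiff]; tauto

lemma Hs_subset : Hs lam lp ⊆ skewCells lam lp := Finset.filter_subset _ _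
lemma Vs_subset : Vs lam lp ⊆ skewCells lam lp := Finset.filter_subset _ _
lemma Fs_subset : Fs lam lp ⊆ skewCells lam lp := fun c hc => (mem_Fs.mp hc).1

lemma HV_disj (hbr : IsBrokenRibbon lam lp) {c : ℕ × ℕ} (hH : c ∈ Hs lam lp) :
    c ∉ Vs lam lp := by
  intro hV
  rw [mem_Hs] at hH
  rw [mem_Vs] at hV
  obtain ⟨a, b⟩ := c
  obtain ⟨hpos, hup⟩ := hV.2
  simp only at hpos hup hH
  obtain ⟨i, rfl⟩ : ∃ i, a = i + 1 := ⟨a - 1, by omega⟩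
  exact noL hbr (by simpa using hup) hH.1 hH.2

lemma endCell_Fs {c : ℕ × ℕ} (hc : c ∈ skewCells lam lp) :
    endCell (skewCells lam lp) c ∈ Fs lam lp :=
  mem_Fs.mpr ⟨endCell_mem hc, (endCell_spec _ c).1, (endCell_spec _ c).2⟩

lemma endCell_right {S : Finset (ℕ × ℕ)} {c : ℕ × ℕ} (h1 : (c.1, c.2 + 1) ∈ S) :
    endCell S c = endCell S (c.1, c.2 + 1) := by
  rw [endCell_def]; simp [h1]

lemma endCell_up (hbr : IsBrokenRibbon lam lp) {c : ℕ × ℕ}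
    (hc : c ∈ skewCells lam lp) (hpos : 0 < c.1)
    (hup : (c.1 - 1, c.2) ∈ skewCells lam lp) :
    endCell (skewCells lam lp) c = endCell (skewCells lam lp) (c.1 - 1, c.2) := by
  have h1 : (c.1, c.2 + 1) ∉ skewCells lam lp := by
    intro hr
    obtain ⟨a, b⟩ := c
    simp only at hpos hup hr hc
    obtain ⟨i, rfl⟩ : ∃ i, a = i + 1 := ⟨a - 1, by omega⟩
    exact noL hbr (by simpa using hup) hc hr
  rw [endCell_def]; simp [h1, hpos, hup]

lemma endCell_adj (hbr : IsBrokenRibbon lam lp) {c d : ℕ × ℕ}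
    (hc : c ∈ skewCells lam lp) (hd : d ∈ skewCells lam lp) (adj : CellAdj c d) :
    endCell (skewCells lam lp) c = endCell (skewCells lam lp) d := by
  have key : ∀ u v : ℕ × ℕ, u ∈ skewCells lam lp → v ∈ skewCells lam lp →
      (u.1 = v.1 ∧ v.2 = u.2 + 1) ∨ (u.2 = v.2 ∧ u.1 = v.1 + 1) →
      endCell (skewCells lam lp) u = endCell (skewCells lam lp) v := by
    rintro ⟨a, b⟩ ⟨a', b'⟩ hu hv (⟨e1, e2⟩ | ⟨e1, e2⟩) <;> simp only at e1 e2 <;>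
      subst e1 <;> subst e2
    · exact endCell_right (c := (a, b)) (by simpa using hv)
    · have := endCell_up hbr (c := (a' + 1, b)) hu (by omega) (by simpa using hv)
      simpa using this
  rcases adj with ⟨e1, e2 | e2⟩ | ⟨e1, e2 | e2⟩
  · exact (key d c hd hc (Or.inl ⟨e1.symm, e2⟩)).symm
  · exact key c d hc hd (Or.inl ⟨e1, e2⟩)
  · exact key c d hc hd (Or.inr ⟨e1, e2⟩)
  · exact (key d c hd hc (Or.inr ⟨e1.symm, e2⟩)).symm

lemma endCell_eqvGen (hbr : IsBrokenRibbon lam lp)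
    {x y : {c : ℕ × ℕ // c ∈ skewCells lam lp}}
    (h : Relation.EqvGen (fun a b : {c : ℕ × ℕ // c ∈ skewCells lam lp} => CellAdj a.1 b.1) x y) :
    endCell (skewCells lam lp) x.1 = endCell (skewCells lam lp) y.1 := by
  induction h with
  | rel a b hab => exact endCell_adj hbr a.2 b.2 hab
  | refl a => rfl
  | symm a b _ ih => exact ih.symm
  | trans a b c _ _ ih1 ih2 => exact ih1.trans ih2

lemma ribSet_skew (hbr : IsBrokenRibbon lam lp) :
    ribSet (skewCells lam lp) = (Fs lam lp).card := by
  have hbij : Function.Bijective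
      (fun c : {c : ℕ × ℕ // c ∈ Fs lam lp} =>
        mkC (skewCells lam lp) c.1 (Fs_subset c.2)) := by
    constructor
    · intro c d h
      have hx := Quotient.exact h
      have he := endCell_eqvGen hbr hx
      have hc := mem_Fs.mp c.2
      have hd := mem_Fs.mp d.2
      rw [endCell_fix hc.2.1 hc.2.2, endCell_fix hd.2.1 hd.2.2] at he
      exact Subtype.ext he
    · intro q
      obtain ⟨⟨c, hc⟩, rfl⟩ := Quotient.exists_rep (q : Quotient (componentSetoid (skewCells lam lp)))
      exact ⟨⟨endCell (skewCells lam lp) c, endCell_Fs hc⟩, (endCell_mk hc).symm⟩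
  rw [ribSet, ← Nat.card_congr (Equiv.ofBijective _ hbij), Nat.card_eq_finsetCard]

lemma row_conn_aux : ∀ (n i j : ℕ) (hc : (i, j) ∈ skewCells lam lp)
    (hd : (i, j + n) ∈ skewCells lam lp),
    mkC (skewCells lam lp) (i, j) hc = mkC (skewCells lam lp) (i, j + n) hd := by
  intro n
  induction n with
  | zero => intro i j hc hd; exact mkC_congr rfl
  | succ n ih =>
    intro i j hc hd
    have hmid : (i, j + n) ∈ skewCells lam lp := skew_row hc hd (Nat.le_add_right _ _) (by omega)
    exact (ih i j hc hmid).trans (mk_adj hmid hd (Or.inl ⟨rfl, Or.inr rfl⟩))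

lemma row_conn {i j k : ℕ} (hc : (i, j) ∈ skewCells lam lp)
    (hd : (i, k) ∈ skewCells lam lp) :
    mkC (skewCells lam lp) (i, j) hc = mkC (skewCells lam lp) (i, k) hd := by
  rcases le_total j k with h | h
  · obtain ⟨n, rfl⟩ := Nat.exists_eq_add_of_le h
    exact row_conn_aux n i j hc hd
  · obtain ⟨n, rfl⟩ := Nat.exists_eq_add_of_le h
    exact (row_conn_aux n i k hd hc).symm

lemma col_conn_aux : ∀ (n i j : ℕ) (hc : (i, j) ∈ skewCells lam lp)
    (hd : (i + n, j) ∈ skewCells lam lp),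
    mkC (skewCells lam lp) (i, j) hc = mkC (skewCells lam lp) (i + n, j) hd := by
  intro n
  induction n with
  | zero => intro i j hc hd; exact mkC_congr rfl
  | succ n ih =>
    intro i j hc hd
    have hmid : (i + n, j) ∈ skewCells lam lp := skew_col hc hd (Nat.le_add_right _ _) (by omega)
    exact (ih i j hc hmid).trans (mk_adj hmid hd (Or.inr ⟨rfl, Or.inr rfl⟩))

lemma col_conn {i k j : ℕ} (hc : (i, j) ∈ skewCells lam lp)
    (hd : (k, j) ∈ skewCells lam lp) :
    mkC (skewCells lam lp) (i, j) hc = mkC (skewCells lam lp) (k, j) hd := by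
  rcases le_total i k with h | h
  · obtain ⟨n, rfl⟩ := Nat.exists_eq_add_of_le h
    exact col_conn_aux n i j hc hd
  · obtain ⟨n, rfl⟩ := Nat.exists_eq_add_of_le h
    exact (col_conn_aux n k j hd hc).symm

lemma rowPairs_card :
    Nat.card (componentRowPairs (skewCells lam lp)) = (skewCells lam lp \ Hs lam lp).card := by
  have hmem : ∀ c : ℕ × ℕ, c ∈ skewCells lam lp \ Hs lam lp → c ∈ skewCells lam lp :=
    fun c hc => (Finset.mem_sdiff.mp hc).1
  have hbij : Function.Bijective
      (fun c : {c : ℕ × ℕ // c ∈ skewCells lam lp \ Hs lam lp} =>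
        (⟨(mkC (skewCells lam lp) c.1 (hmem c.1 c.2), c.1.1),
          ⟨⟨c.1, hmem c.1 c.2⟩, rfl, rfl⟩⟩ : componentRowPairs (skewCells lam lp))) := by
    constructor
    · rintro ⟨⟨a, b⟩, hc⟩ ⟨⟨a', b'⟩, hd⟩ h
      rw [Subtype.mk.injEq, Prod.mk.injEq] at h
      obtain ⟨-, h2⟩ := h
      simp only at h2
      subst h2
      rw [Finset.mem_sdiff, mem_Hs] at hc hd
      rcases lt_trichotomy b b' with hlt | heq | hlt
      · exact absurd ⟨hc.1, skew_row hc.1 hd.1 (by omega) (by omega)⟩ hc.2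
      · subst heq; rfl
      · exact absurd ⟨hd.1, skew_row hd.1 hc.1 (by omega) (by omega)⟩ hd.2
    · rintro ⟨⟨q, i⟩, ⟨⟨c, hc⟩, hq, hi⟩⟩
      simp only at hq hi
      obtain ⟨d, hd, hdmax⟩ := Finset.exists_max_image
        ((skewCells lam lp).filter fun x => x.1 = i) Prod.snd
        ⟨c, Finset.mem_filter.mpr ⟨hc, hi⟩⟩
      rw [Finset.mem_filter] at hd
      have hdH : d ∉ Hs lam lp := by
        intro hH
        have := hdmax (d.1, d.2 + 1)
          (Finset.mem_filter.mpr ⟨(mem_Hs.mp hH).2, hd.2⟩)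
        simp at this
      refine ⟨⟨d, Finset.mem_sdiff.mpr ⟨hd.1, hdH⟩⟩, ?_⟩
      rw [Subtype.mk.injEq, Prod.mk.injEq]
      constructor
      · rw [← hq]
        have : mkC (skewCells lam lp) d hd.1 = mkC (skewCells lam lp) c hc := by
          have hcd : c = (i, c.2) := by rw [← hi]
          have hdd : d = (i, d.2) := by rw [← hd.2]
          have hd1 := hd.1
          have hc' : (i, c.2) ∈ skewCells lam lp := by rwa [hcd] at hc
          have hd' : (i, d.2) ∈ skewCells lam lp := by rwa [hdd] at hd1
          exact ((mkC_congr hdd).trans (row_conn hd' hc')).trans (mkC_congr hcd.symm)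
        exact this
      · exact hd.2
  exact (Nat.card_congr (Equiv.ofBijective _ hbij)).symm.trans (Nat.card_eq_finsetCard _)

lemma colPairs_card :
    Nat.card (componentColPairs (skewCells lam lp)) = (skewCells lam lp \ Vs lam lp).card := by
  have hmem : ∀ c : ℕ × ℕ, c ∈ skewCells lam lp \ Vs lam lp → c ∈ skewCells lam lp :=
    fun c hc => (Finset.mem_sdiff.mp hc).1
  have hbij : Function.Bijective
      (fun c : {c : ℕ × ℕ // c ∈ skewCells lam lp \ Vs lam lp} =>
        (⟨(mkC (skewCells lam lp) c.1 (hmem c.1 c.2), c.1.2),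
          ⟨⟨c.1, hmem c.1 c.2⟩, rfl, rfl⟩⟩ : componentColPairs (skewCells lam lp))) := by
    constructor
    · rintro ⟨⟨a, b⟩, hc⟩ ⟨⟨a', b'⟩, hd⟩ h
      rw [Subtype.mk.injEq, Prod.mk.injEq] at h
      obtain ⟨-, h2⟩ := h
      simp only at h2
      subst h2
      rw [Finset.mem_sdiff, mem_Vs] at hc hd
      rcases lt_trichotomy a a' with hlt | heq | hlt
      · refine absurd ⟨hd.1, by omega, ?_⟩ hd.2
        have : (a' - 1, b) ∈ skewCells lam lp := skew_col hc.1 hd.1 (by omega) (by omega)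
        simpa using this
      · subst heq; rfl
      · refine absurd ⟨hc.1, by omega, ?_⟩ hc.2
        have : (a - 1, b) ∈ skewCells lam lp := skew_col hd.1 hc.1 (by omega) (by omega)
        simpa using this
    · rintro ⟨⟨q, j⟩, ⟨⟨c, hc⟩, hq, hj⟩⟩
      simp only at hq hj
      obtain ⟨d, hd, hdmin⟩ := Finset.exists_min_image
        ((skewCells lam lp).filter fun x => x.2 = j) Prod.fst
        ⟨c, Finset.mem_filter.mpr ⟨hc, hj⟩⟩
      rw [Finset.mem_filter] at hd
      have hdV : d ∉ Vs lam lp := by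
        intro hV
        rw [mem_Vs] at hV
        have := hdmin (d.1 - 1, d.2)
          (Finset.mem_filter.mpr ⟨hV.2.2, hd.2⟩)
        simp only at this
        omega
      refine ⟨⟨d, Finset.mem_sdiff.mpr ⟨hd.1, hdV⟩⟩, ?_⟩
      rw [Subtype.mk.injEq, Prod.mk.injEq]
      constructor
      · rw [← hq]
        have hcd : c = (c.1, j) := by rw [← hj]
        have hdd : d = (d.1, j) := by rw [← hd.2]
        have hd1 := hd.1
        have hc' : (c.1, j) ∈ skewCells lam lp := by rwa [hcd] at hc
        have hd' : (d.1, j) ∈ skewCells lam lp := by rwa [hdd] at hd1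
        exact ((mkC_congr hdd).trans (col_conn hd' hc')).trans (mkC_congr hcd.symm)
      · exact hd.2
  exact (Nat.card_congr (Equiv.ofBijective _ hbij)).symm.trans (Nat.card_eq_finsetCard _)

lemma card_sum (hbr : IsBrokenRibbon lam lp) :
    (skewCells lam lp).card
      = (Hs lam lp).card + (Vs lam lp).card + (Fs lam lp).card := by
  have hVsub : Vs lam lp ⊆ skewCells lam lp \ Hs lam lp := fun c hc =>
    Finset.mem_sdiff.mpr ⟨Vs_subset hc, fun hH => HV_disj hbr hH hc⟩
  have h1 : (skewCells lam lp \ Hs lam lp).card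
      = (skewCells lam lp).card - (Hs lam lp).card := Finset.card_sdiff_of_subset Hs_subset
  have h2 : (Fs lam lp).card = (skewCells lam lp \ Hs lam lp).card - (Vs lam lp).card :=
    Finset.card_sdiff_of_subset hVsub
  have h3 := Finset.card_le_card (Hs_subset (lam := lam) (lp := lp))
  have h4 := Finset.card_le_card hVsub
  omega

lemma hgt_eq (hbr : IsBrokenRibbon lam lp) : hgt lam lp = (Vs lam lp).card := by
  have h1 := rowPairs_card (lam := lam) (lp := lp)
  have h2 := ribSet_skew hbr
  have h3 := card_sum hbr
  have h4 : (skewCells lam lp \ Hs lam lp).card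
      = (skewCells lam lp).card - (Hs lam lp).card := Finset.card_sdiff_of_subset Hs_subset
  have h5 := Finset.card_le_card (Hs_subset (lam := lam) (lp := lp))
  rw [hgt, hgtSet, h1, h2, h4]
  omega

lemma wt_eq (hbr : IsBrokenRibbon lam lp) : wt lam lp = (Hs lam lp).card := by
  have h1 := colPairs_card (lam := lam) (lp := lp)
  have h2 := ribSet_skew hbr
  have h3 := card_sum hbr
  have h4 : (skewCells lam lp \ Vs lam lp).card
      = (skewCells lam lp).card - (Vs lam lp).card := Finset.card_sdiff_of_subset Vs_subset
  have h5 := Finset.card_le_card (Vs_subset (lam := lam) (lp := lp))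
  rw [wt, wtSet, h1, h2, h4]
  omega

lemma rib_eq (hbr : IsBrokenRibbon lam lp) : rib lam lp = (Fs lam lp).card := by
  rw [rib, ribSet_skew hbr]

lemma isLowerSet_of_steps {s : Set (ℕ × ℕ)}
    (h1 : ∀ i j : ℕ, (i + 1, j) ∈ s → (i, j) ∈ s)
    (h2 : ∀ i j : ℕ, (i, j + 1) ∈ s → (i, j) ∈ s) : IsLowerSet s := by
  have row : ∀ (n i j : ℕ), (i + n, j) ∈ s → (i, j) ∈ s := by
    intro n
    induction n with
    | zero => intro i j h; exact h
    | succ n ih => intro i j h; exact ih i j (h1 (i + n) j h)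
  have col : ∀ (n i j : ℕ), (i, j + n) ∈ s → (i, j) ∈ s := by
    intro n
    induction n with
    | zero => intro i j h; exact h
    | succ n ih => intro i j h; exact ih i j (h2 i (j + n) h)
  rintro ⟨a1, a2⟩ ⟨b1, b2⟩ ⟨hb1, hb2⟩ ha
  obtain ⟨n1, rfl⟩ := Nat.exists_eq_add_of_le (hb1 : b1 ≤ a1)
  obtain ⟨n2, rfl⟩ := Nat.exists_eq_add_of_le (hb2 : b2 ≤ a2)
  exact col n2 b1 b2 (row n1 b1 (b2 + n2) ha)

def Pvalid (lam lp l' : YoungDiagram) : Prop :=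
  lam ≤ l' ∧ l' ≤ lp ∧ IsHorizontalStrip lam l' ∧ IsVerticalStrip l' lp

def build (h : lam ≤ lp) (hbr : IsBrokenRibbon lam lp) (G : Finset (ℕ × ℕ))
    (hG : G ⊆ Fs lam lp) : YoungDiagram :=
  ⟨lam.cells ∪ Hs lam lp ∪ G, by
    have hSmem : ∀ c : ℕ × ℕ, c ∈ Hs lam lp ∪ G →
        c ∈ skewCells lam lp ∧ c ∉ Vs lam lp := by
      intro c hc
      rcases Finset.mem_union.mp hc with hc | hc
      · exact ⟨Hs_subset hc, HV_disj hbr hc⟩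
      · have := hG hc
        rw [mem_Fs'] at this
        exact ⟨this.1, this.2.2⟩
    apply isLowerSet_of_steps
    · intro i j hm
      simp only [Finset.coe_union, Set.mem_union, Finset.mem_coe,
        YoungDiagram.mem_cells] at hm ⊢
      rcases hm with (hm | hm) | hm
      · exact Or.inl (Or.inl (lam.up_left_mem (Nat.le_succ i) le_rfl hm))
      all_goals {
        refine Or.inl (Or.inl ?_)
        have hS := hSmem (i + 1, j) (by simp [hm])
        have hlp : (i, j) ∈ lp :=
          lp.up_left_mem (Nat.le_succ i) le_rfl (mem_skew.mp hS.1).1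
        have hnotS : (i, j) ∉ skewCells lam lp := by
          intro hs
          exact hS.2 (mem_Vs.mpr ⟨hS.1, by simp, by simpa using hs⟩)
        rw [mem_skew] at hnotS
        tauto }
    · intro i j hm
      simp only [Finset.coe_union, Set.mem_union, Finset.mem_coe,
        YoungDiagram.mem_cells] at hm ⊢
      rcases hm with (hm | hm) | hm
      · exact Or.inl (Or.inl (lam.up_left_mem le_rfl (Nat.le_succ j) hm))
      all_goals {
        have hS := hSmem (i, j + 1) (by simp [hm])
        have hlp : (i, j) ∈ lp :=
          lp.up_left_mem le_rfl (Nat.le_succ j) (mem_skew.mp hS.1).1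
        by_cases hlam : (i, j) ∈ lam
        · exact Or.inl (Or.inl hlam)
        · refine Or.inl (Or.inr (mem_Hs.mpr ⟨mem_skew.mpr ⟨hlp, hlam⟩, ?_⟩))
          simpa using hS.1 }⟩

variable {h : lam ≤ lp} {hbr : IsBrokenRibbon lam lp} {G : Finset (ℕ × ℕ)}

lemma build_cells {hG : G ⊆ Fs lam lp} : (build h hbr G hG).cells = lam.cells ∪ Hs lam lp ∪ G := rfl

lemma HG_sub_S (hG : G ⊆ Fs lam lp) : ∀ c : ℕ × ℕ, c ∈ Hs lam lp ∪ G → c ∈ skewCells lam lp := by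
  intro c hc
  rcases Finset.mem_union.mp hc with hc | hc
  · exact Hs_subset hc
  · exact Fs_subset (hG hc)

lemma build_skew_lower (hG : G ⊆ Fs lam lp) : skewCells lam (build h hbr G hG) = Hs lam lp ∪ G := by
  ext c
  simp only [skewCells, Finset.mem_sdiff, build_cells, Finset.mem_union]
  constructor
  · tauto
  · intro hc
    have := HG_sub_S hG c (Finset.mem_union.mpr hc)
    rw [mem_skew] at this
    refine ⟨by tauto, ?_⟩
    simpa [YoungDiagram.mem_cells] using this.2

lemma build_skew_upper (hG : G ⊆ Fs lam lp) :
    skewCells (build h hbr G hG) lp = skewCells lam lp \ (Hs lam lp ∪ G) := by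
  ext c
  simp only [skewCells, Finset.mem_sdiff, build_cells, Finset.mem_union]
  tauto

lemma build_le (hG : G ⊆ Fs lam lp) : build h hbr G hG ≤ lp := by
  rw [← YoungDiagram.cells_subset_iff, build_cells]
  intro c hc
  simp only [Finset.mem_union] at hc
  rcases hc with (hc | hc) | hc
  · exact YoungDiagram.cells_subset_iff.mpr h hc
  · have := (mem_skew.mp (Hs_subset hc)).1
    simpa [YoungDiagram.mem_cells] using this
  · have := (mem_skew.mp (Fs_subset (hG hc))).1
    simpa [YoungDiagram.mem_cells] using this

lemma build_ge (hG : G ⊆ Fs lam lp) : lam ≤ build h hbr G hG := by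
  rw [← YoungDiagram.cells_subset_iff, build_cells]
  intro c hc
  simp [hc]

lemma build_P (hG : G ⊆ Fs lam lp) : Pvalid lam lp (build h hbr G hG) := by
  refine ⟨build_ge hG, build_le hG, ?_, ?_⟩
  · intro i j hij
    rw [build_skew_lower hG] at hij
    obtain ⟨hc, hd⟩ := hij
    have hdS := HG_sub_S hG _ hd
    have hcS := HG_sub_S hG _ hc
    have hV : (i + 1, j) ∈ Vs lam lp := mem_Vs.mpr ⟨hdS, by simp, by simpa using hcS⟩
    rcases Finset.mem_union.mp hd with hd' | hd'
    · exact HV_disj hbr hd' hV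
    · exact (mem_Fs'.mp (hG hd')).2.2 hV
  · intro i j hij
    rw [build_skew_upper hG] at hij
    obtain ⟨hc, hd⟩ := hij
    rw [Finset.mem_sdiff] at hc hd
    exact hc.2 (Finset.mem_union_left _ (mem_Hs.mpr ⟨hc.1, hd.1⟩))

lemma G_disj_Hs (hG : G ⊆ Fs lam lp) : Disjoint (Hs lam lp) G := by
  rw [Finset.disjoint_right]
  intro c hc
  exact (mem_Fs'.mp (hG hc)).2.1

lemma build_size_lower (hG : G ⊆ Fs lam lp) :
    skewSize lam (build h hbr G hG) = (Hs lam lp).card + G.card := by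
  rw [skewSize, build_skew_lower hG,
    Finset.card_union_of_disjoint (G_disj_Hs hG)]

lemma build_size_upper (hG : G ⊆ Fs lam lp) :
    skewSize (build h hbr G hG) lp
      = (skewCells lam lp).card - ((Hs lam lp).card + G.card) := by
  rw [skewSize, build_skew_upper hG, Finset.card_sdiff_of_subset,
    Finset.card_union_of_disjoint (G_disj_Hs hG)]
  intro c hc
  exact HG_sub_S hG c hc

lemma valid_is_build (h : lam ≤ lp) (hbr : IsBrokenRibbon lam lp) {l' : YoungDiagram}
    (hP : Pvalid lam lp l') :
    ∃ (G : Finset (ℕ × ℕ)) (hG : G ⊆ Fs lam lp), l' = build h hbr G hG := by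
  obtain ⟨hle1, hle2, hHS, hVS⟩ := hP
  set B := skewCells lam l' with hB
  have hBsub : B ⊆ skewCells lam lp := by
    intro c hc
    rw [hB, mem_skew] at hc
    rw [mem_skew]
    exact ⟨YoungDiagram.cells_subset_iff.mpr hle2 hc.1, hc.2⟩
  have hHsB : Hs lam lp ⊆ B := by
    intro c hc
    rw [mem_Hs] at hc
    obtain ⟨hcS, hcr⟩ := hc
    rw [hB, mem_skew]
    refine ⟨?_, (mem_skew.mp hcS).2⟩
    by_contra hcl
    have hrl : (c.1, c.2 + 1) ∉ l' := by
      intro hrl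
      exact hcl (l'.up_left_mem le_rfl (Nat.le_succ c.2) hrl)
    exact hVS c.1 c.2 ⟨mem_skew.mpr ⟨(mem_skew.mp hcS).1, hcl⟩,
      mem_skew.mpr ⟨(mem_skew.mp hcr).1, hrl⟩⟩
  have hBV : ∀ c : ℕ × ℕ, c ∈ B → c ∉ Vs lam lp := by
    intro c hc hV
    rw [mem_Vs] at hV
    obtain ⟨hcS, hpos, hup⟩ := hV
    have hupB : (c.1 - 1, c.2) ∈ B := by
      rw [hB, mem_skew]
      refine ⟨l'.up_left_mem (Nat.sub_le _ _) le_rfl ?_, (mem_skew.mp hup).2⟩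
      exact (mem_skew.mp hc).1
    obtain ⟨a, b⟩ := c
    simp only at hpos hupB
    obtain ⟨i, rfl⟩ : ∃ i, a = i + 1 := ⟨a - 1, by omega⟩
    refine hHS i b ⟨by simpa using hupB, hc⟩
  have hGsub : B \ Hs lam lp ⊆ Fs lam lp := by
    intro c hc
    rw [Finset.mem_sdiff] at hc
    exact mem_Fs'.mpr ⟨hBsub hc.1, hc.2, hBV c hc.1⟩
  refine ⟨B \ Hs lam lp, hGsub, ?_⟩
  have hcells : (build h hbr (B \ Hs lam lp) hGsub).cells = l'.cells := by
    rw [build_cells, Finset.union_assoc, Finset.union_sdiff_of_subset hHsB]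
    ext c
    simp only [Finset.mem_union, hB, skewCells, Finset.mem_sdiff]
    constructor
    · rintro (hc | hc)
      · exact YoungDiagram.cells_subset_iff.mpr hle1 hc
      · exact hc.1
    · intro hc
      by_cases hcl : c ∈ lam.cells
      · exact Or.inl hcl
      · exact Or.inr ⟨hc, hcl⟩
  exact (YoungDiagram.ext hcells).symm

def validSet (h : lam ≤ lp) (hbr : IsBrokenRibbon lam lp) : Finset YoungDiagram :=
  (Fs lam lp).powerset.attach.image
    (fun G => build h hbr G.1 (Finset.mem_powerset.mp G.2))

lemma mem_validSet {h : lam ≤ lp} {hbr : IsBrokenRibbon lam lp} {l' : YoungDiagram} :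
    l' ∈ validSet h hbr ↔ Pvalid lam lp l' := by
  constructor
  · intro hl
    obtain ⟨G, -, rfl⟩ := Finset.mem_image.mp hl
    exact build_P _
  · intro hl
    obtain ⟨G, hG, rfl⟩ := valid_is_build h hbr hl
    exact Finset.mem_image.mpr ⟨⟨G, Finset.mem_powerset.mpr hG⟩,
      Finset.mem_attach _ _, rfl⟩

lemma build_inj {h : lam ≤ lp} {hbr : IsBrokenRibbon lam lp} {G G' : Finset (ℕ × ℕ)}
    {hG : G ⊆ Fs lam lp} {hG' : G' ⊆ Fs lam lp}
    (heq : build h hbr G hG = build h hbr G' hG') : G = G' := by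
  have hc := congrArg YoungDiagram.cells heq
  rw [build_cells, build_cells] at hc
  have key : ∀ (A B : Finset (ℕ × ℕ)), A ⊆ Fs lam lp → B ⊆ Fs lam lp →
      lam.cells ∪ Hs lam lp ∪ A = lam.cells ∪ Hs lam lp ∪ B → ∀ c ∈ A, c ∈ B := by
    intro A B hA hB hAB c hcA
    have h1 : c ∈ lam.cells ∪ Hs lam lp ∪ B := by
      rw [← hAB]; simp [hcA]
    have h2 := mem_Fs'.mp (hA hcA)
    have h3 : c ∉ lam.cells := by
      have := mem_skew.mp h2.1
      simpa [YoungDiagram.mem_cells] using this.2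
    simp only [Finset.mem_union] at h1
    rcases h1 with (h1 | h1) | h1
    · exact absurd h1 h3
    · exact absurd h1 h2.2.1
    · exact h1
  exact Finset.Subset.antisymm (key G G' hG hG' hc) (key G' G hG' hG hc.symm)

lemma finsum_valid (h : lam ≤ lp) (hbr : IsBrokenRibbon lam lp)
    (g : YoungDiagram → Polynomial ℤ) (hg : ∀ l', ¬ Pvalid lam lp l' → g l' = 0) :
    ∑ᶠ l', g l' = ∑ G ∈ (Fs lam lp).powerset.attach,
      g (build h hbr G.1 (Finset.mem_powerset.mp G.2)) := by
  rw [finsum_eq_finset_sum_of_support_subset g (s := validSet h hbr) ?_, validSet,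
    Finset.sum_image ?_]
  · intro x hx y hy hxy
    exact Subtype.ext (build_inj hxy)
  · intro l' hl'
    rw [Function.mem_support] at hl'
    rw [Finset.mem_coe, mem_validSet]
    by_contra hP
    exact hl' (hg l' hP)

lemma sum_pow_card_sub (s : Finset (ℕ × ℕ)) (x : Polynomial ℤ) :
    ∑ t ∈ s.powerset, x ^ (s.card - t.card) = (1 + x) ^ s.card := by
  have h := Finset.prod_add (fun _ : ℕ × ℕ => (1 : Polynomial ℤ)) (fun _ => x) s
  rw [Finset.prod_const] at h
  rw [h]
  apply Finset.sum_congr rfl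
  intro t ht
  rw [Finset.prod_const_one, Finset.prod_const, one_mul,
    Finset.card_sdiff_of_subset (Finset.mem_powerset.mp ht)]

lemma sum_pow_card (s : Finset (ℕ × ℕ)) (x : Polynomial ℤ) :
    ∑ t ∈ s.powerset, x ^ t.card = (x + 1) ^ s.card := by
  have h := Finset.prod_add (fun _ : ℕ × ℕ => x) (fun _ => (1 : Polynomial ℤ)) s
  rw [Finset.prod_const] at h
  rw [h]
  apply Finset.sum_congr rfl
  intro t ht
  rw [Finset.prod_const_one, Finset.prod_const, mul_one]

lemma sumA (h : lam ≤ lp) (hbr : IsBrokenRibbon lam lp) :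
    (∑ᶠ l', if Pvalid lam lp l' then (-(X : Polynomial ℤ)) ^ (skewSize l' lp) else 0)
      = (-(X : Polynomial ℤ)) ^ (hgt lam lp) * (1 - X) ^ (rib lam lp) := by
  rw [finsum_valid h hbr _ (fun l' hl' => if_neg hl')]
  have hcs := card_sum hbr
  have step : ∀ G ∈ (Fs lam lp).powerset.attach,
      (if Pvalid lam lp (build h hbr G.1 (Finset.mem_powerset.mp G.2))
        then (-(X : Polynomial ℤ)) ^ (skewSize (build h hbr G.1 (Finset.mem_powerset.mp G.2)) lp)
        else 0)
      = (-(X : Polynomial ℤ)) ^ ((Vs lam lp).card) *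
          (-(X : Polynomial ℤ)) ^ ((Fs lam lp).card - G.1.card) := by
    intro G hGmem
    rw [if_pos (build_P _), build_size_upper]
    rw [← pow_add]
    congr 1
    have hle := Finset.card_le_card (Finset.mem_powerset.mp G.2)
    omega
  rw [Finset.sum_congr rfl step, ← Finset.mul_sum]
  rw [Finset.sum_attach ((Fs lam lp).powerset)
    (fun t => (-(X : Polynomial ℤ)) ^ ((Fs lam lp).card - t.card))]
  rw [sum_pow_card_sub, hgt_eq hbr, rib_eq hbr,
    show (1 : Polynomial ℤ) + -X = 1 - X from by ring]

lemma sumB (h : lam ≤ lp) (hbr : IsBrokenRibbon lam lp) :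
    (∑ᶠ l', if Pvalid lam lp l' then (-(X : Polynomial ℤ)) ^ (skewSize lam l') else 0)
      = (-(X : Polynomial ℤ)) ^ (wt lam lp) * (1 - X) ^ (rib lam lp) := by
  rw [finsum_valid h hbr _ (fun l' hl' => if_neg hl')]
  have step : ∀ G ∈ (Fs lam lp).powerset.attach,
      (if Pvalid lam lp (build h hbr G.1 (Finset.mem_powerset.mp G.2))
        then (-(X : Polynomial ℤ)) ^ (skewSize lam (build h hbr G.1 (Finset.mem_powerset.mp G.2)))
        else 0)
      = (-(X : Polynomial ℤ)) ^ ((Hs lam lp).card) *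
          (-(X : Polynomial ℤ)) ^ (G.1.card) := by
    intro G hGmem
    rw [if_pos (build_P _), build_size_lower, pow_add]
  rw [Finset.sum_congr rfl step, ← Finset.mul_sum]
  rw [Finset.sum_attach ((Fs lam lp).powerset)
    (fun t => (-(X : Polynomial ℤ)) ^ (t.card))]
  rw [sum_pow_card, wt_eq hbr, rib_eq hbr,
    show -(X : Polynomial ℤ) + 1 = 1 - X from by ring]

end StripThm

/-- **Strip-decomposition generating function of a pair of broken ribbons.** -/
theorem strip_decomposition_generating_function
    (lam lp mm mu : YoungDiagram) (h1 : lam ≤ lp) (h2 : mm ≤ mu)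
    (hbr1 : IsBrokenRibbon lam lp) (hbr2 : IsBrokenRibbon mm mu) :
    (∑ᶠ (l' : YoungDiagram) (m' : YoungDiagram),
      if lam ≤ l' ∧ l' ≤ lp ∧ mm ≤ m' ∧ m' ≤ mu ∧
          IsHorizontalStrip lam l' ∧ IsHorizontalStrip mm m' ∧
          IsVerticalStrip l' lp ∧ IsVerticalStrip m' mu then
        ((-1 : Polynomial ℤ) ^ (skewSize mm mu) *
          (-(Polynomial.X : Polynomial ℤ)) ^ (skewSize l' lp + skewSize mm m'))
      else 0) =
    (-1 : Polynomial ℤ) ^ (skewSize mm mu) *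
      (-(Polynomial.X : Polynomial ℤ)) ^ (hgt lam lp + wt mm mu) *
      (1 - Polynomial.X) ^ (rib lam lp + rib mm mu) := by
  classical
  set fA : YoungDiagram → Polynomial ℤ := fun l' =>
    if StripThm.Pvalid lam lp l' then (-(Polynomial.X : Polynomial ℤ)) ^ (skewSize l' lp)
    else 0 with hfA
  set fB : YoungDiagram → Polynomial ℤ := fun m' =>
    if StripThm.Pvalid mm mu m' then (-(Polynomial.X : Polynomial ℤ)) ^ (skewSize mm m')
    else 0 with hfB
  have hfinA : (Function.support fA).Finite := by
    apply Set.Finite.subset (StripThm.validSet h1 hbr1).finite_toSet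
    intro l' hl'
    rw [Function.mem_support] at hl'
    rw [Finset.mem_coe, StripThm.mem_validSet]
    by_contra hP
    exact hl' (by rw [hfA]; exact if_neg hP)
  have hfinB : (Function.support fB).Finite := by
    apply Set.Finite.subset (StripThm.validSet h2 hbr2).finite_toSet
    intro m' hm'
    rw [Function.mem_support] at hm'
    rw [Finset.mem_coe, StripThm.mem_validSet]
    by_contra hP
    exact hm' (by rw [hfB]; exact if_neg hP)
  have key : ∀ (l' m' : YoungDiagram),
      (if lam ≤ l' ∧ l' ≤ lp ∧ mm ≤ m' ∧ m' ≤ mu ∧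
          IsHorizontalStrip lam l' ∧ IsHorizontalStrip mm m' ∧
          IsVerticalStrip l' lp ∧ IsVerticalStrip m' mu then
        ((-1 : Polynomial ℤ) ^ (skewSize mm mu) *
          (-(Polynomial.X : Polynomial ℤ)) ^ (skewSize l' lp + skewSize mm m'))
      else 0)
      = (fA l' * (-1 : Polynomial ℤ) ^ (skewSize mm mu)) * fB m' := by
    intro l' m'
    have hiff : (lam ≤ l' ∧ l' ≤ lp ∧ mm ≤ m' ∧ m' ≤ mu ∧
          IsHorizontalStrip lam l' ∧ IsHorizontalStrip mm m' ∧
          IsVerticalStrip l' lp ∧ IsVerticalStrip m' mu)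
        ↔ (StripThm.Pvalid lam lp l' ∧ StripThm.Pvalid mm mu m') := by
      constructor
      · rintro ⟨a, b, c, d, e, f, g, h⟩
        exact ⟨⟨a, b, e, g⟩, ⟨c, d, f, h⟩⟩
      · rintro ⟨⟨a, b, e, g⟩, ⟨c, d, f, h⟩⟩
        exact ⟨a, b, c, d, e, f, g, h⟩
    rw [if_congr hiff rfl rfl, hfA, hfB]
    simp only
    by_cases hP : StripThm.Pvalid lam lp l' <;> by_cases hQ : StripThm.Pvalid mm mu m'
    · rw [if_pos hP, if_pos hQ, if_pos ⟨hP, hQ⟩, pow_add]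
      ring
    · rw [if_neg hQ, if_neg (fun hcon => hQ hcon.2), mul_zero]
    · rw [if_neg hP, if_neg (fun hcon => hP hcon.1), zero_mul, zero_mul]
    · rw [if_neg hP, if_neg (fun hcon => hP hcon.1), zero_mul, zero_mul]
  calc (∑ᶠ (l' : YoungDiagram) (m' : YoungDiagram),
      if lam ≤ l' ∧ l' ≤ lp ∧ mm ≤ m' ∧ m' ≤ mu ∧
          IsHorizontalStrip lam l' ∧ IsHorizontalStrip mm m' ∧
          IsVerticalStrip l' lp ∧ IsVerticalStrip m' mu then
        ((-1 : Polynomial ℤ) ^ (skewSize mm mu) *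
          (-(Polynomial.X : Polynomial ℤ)) ^ (skewSize l' lp + skewSize mm m'))
      else 0)
      = ∑ᶠ (l' : YoungDiagram),
          (fA l' * (-1 : Polynomial ℤ) ^ (skewSize mm mu)) * ∑ᶠ (m' : YoungDiagram), fB m' := by
        apply finsum_congr
        intro l'
        rw [mul_finsum fB (fA l' * (-1 : Polynomial ℤ) ^ (skewSize mm mu))]
        apply finsum_congr
        intro m'
        exact key l' m'
    _ = (∑ᶠ (l' : YoungDiagram), fA l') *
          ((-1 : Polynomial ℤ) ^ (skewSize mm mu) * ∑ᶠ (m' : YoungDiagram), fB m') := by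
        trans (∑ᶠ (l' : YoungDiagram),
          fA l' * ((-1 : Polynomial ℤ) ^ (skewSize mm mu) * ∑ᶠ (m' : YoungDiagram), fB m'))
        · exact finsum_congr fun l' => by ring
        · exact (finsum_mul fA _).symm
    _ = (-1 : Polynomial ℤ) ^ (skewSize mm mu) *
          (-(Polynomial.X : Polynomial ℤ)) ^ (hgt lam lp + wt mm mu) *
          (1 - Polynomial.X) ^ (rib lam lp + rib mm mu) := by
        rw [hfA, hfB]
        rw [StripThm.sumA h1 hbr1, StripThm.sumB h2 hbr2, pow_add, pow_add]
        ring
end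
end

section
/- (Counting k-NE tableaux on a broken ribbon) Let μ ⊆ λ be partitions such that λ/μ is a broken ribbon with r = |λ/μ| ≥ 1 cells, and let 1 ≤ k ≤ r. Then the number of standard Young tableaux of shape λ/μ having the k-NE property equals the binomial coefficient C(rib(λ/μ) − 1, k − 1 − wt(λ/μ)), interpreted as 0 when k − 1 − wt(λ/μ) is negative or exceeds rib(λ/μ) − 1. -/
open scoped Classical

noncomputable section

/-- A standard Young tableau of skew shape `lam/mu` with `n = skewSize mu lam` cells:
a bijective filling of the skew cells with `1, …, n`, strictly increasing along rows
and down columns (and `0` outside the skew cells). -/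
structure SkewSYT (mu lam : YoungDiagram) where
  entry : ℕ × ℕ → ℕ
  zeros : ∀ c, c ∉ skewCells mu lam → entry c = 0
  mem : ∀ c ∈ skewCells mu lam, 1 ≤ entry c ∧ entry c ≤ skewSize mu lam
  bij : ∀ v : ℕ, 1 ≤ v → v ≤ skewSize mu lam → ∃! c, c ∈ skewCells mu lam ∧ entry c = v
  rowStrict : ∀ i j, (i, j) ∈ skewCells mu lam → (i, j + 1) ∈ skewCells mu lam →
    entry (i, j) < entry (i, j + 1)
  colStrict : ∀ i j, (i, j) ∈ skewCells mu lam → (i + 1, j) ∈ skewCells mu lam →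
    entry (i, j) < entry (i + 1, j)

/-- The `k`-NE property of a standard Young tableau `T` of shape `lam/mu`:
(NE1) the rightmost cell of the first nonempty row of the skew diagram has entry `k`;
(NE2) if `i < j < k` then the cell containing `i` is in a strictly smaller column than
the cell containing `j`;
(NE3) if `k < i < j` then the cell containing `i` is in a strictly smaller row than
the cell containing `j`. -/
def HasKNE {mu lam : YoungDiagram} (T : SkewSYT mu lam) (k : ℕ) : Prop :=
  (∀ i j : ℕ, (i, j) ∈ skewCells mu lam → (∀ c ∈ skewCells mu lam, i ≤ c.1) →
      (∀ j' : ℕ, (i, j') ∈ skewCells mu lam → j' ≤ j) → T.entry (i, j) = k) ∧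
  (∀ c ∈ skewCells mu lam, ∀ d ∈ skewCells mu lam,
      T.entry c < T.entry d → T.entry d < k → c.2 < d.2) ∧
  (∀ c ∈ skewCells mu lam, ∀ d ∈ skewCells mu lam,
      k < T.entry c → T.entry c < T.entry d → c.1 < d.1)


namespace KNE

variable {mu lam : YoungDiagram}

lemma mem_skew {i j : ℕ} :
    (i, j) ∈ skewCells mu lam ↔ mu.rowLen i ≤ j ∧ j < lam.rowLen i := by
  simp only [skewCells, Finset.mem_sdiff, YoungDiagram.mem_cells,
    YoungDiagram.mem_iff_lt_rowLen, not_lt]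
  tauto

/-- rows i and i+1 of the skew diagram are connected -/
def Conn (mu lam : YoungDiagram) (i : ℕ) : Prop := mu.rowLen i < lam.rowLen (i + 1)

/-- index of the top row of the component of row i -/
def start (mu lam : YoungDiagram) : ℕ → ℕ
  | 0 => 0
  | i + 1 => if Conn mu lam i then start mu lam i else i + 1

lemma start_le (i : ℕ) : start mu lam i ≤ i := by
  induction i with
  | zero => simp [start]
  | succ n ih =>
    rw [start]
    split
    · omega
    · omega

lemma start_succ_of_conn {i : ℕ} (h : Conn mu lam i) :
    start mu lam (i + 1) = start mu lam i := by rw [start, if_pos h]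

lemma start_succ_of_not_conn {i : ℕ} (h : ¬ Conn mu lam i) :
    start mu lam (i + 1) = i + 1 := by rw [start, if_neg h]

lemma start_start (i : ℕ) : start mu lam (start mu lam i) = start mu lam i := by
  induction i with
  | zero => simp [start]
  | succ n ih =>
    rw [start]
    split
    · exact ih
    · rw [start_succ_of_not_conn ‹_›]

lemma not_conn_of_start_self {i : ℕ} (h : start mu lam (i + 1) = i + 1) :
    ¬ Conn mu lam i := by
  intro hc
  rw [start_succ_of_conn hc] at h
  have := start_le (mu := mu) (lam := lam) i
  omega

lemma conn_of_vert {i j : ℕ} (h1 : (i, j) ∈ skewCells mu lam)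
    (h2 : (i + 1, j) ∈ skewCells mu lam) : Conn mu lam i := by
  rw [mem_skew] at h1 h2
  exact lt_of_le_of_lt h1.1 h2.2

lemma col_contig {i i' t j : ℕ} (h1 : (i, j) ∈ skewCells mu lam)
    (h2 : (i', j) ∈ skewCells mu lam) (ht1 : i ≤ t) (ht2 : t ≤ i') :
    (t, j) ∈ skewCells mu lam := by
  rw [mem_skew] at *
  exact ⟨le_trans (mu.rowLen_anti i t ht1) h1.1, lt_of_lt_of_le h2.2 (lam.rowLen_anti t i' ht2)⟩

/-- the relation underlying componentSetoid -/
abbrev Rel (S : Finset (ℕ × ℕ)) (x y : {c : ℕ × ℕ // c ∈ S}) : Prop :=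
  Relation.EqvGen (fun x y : {c : ℕ × ℕ // c ∈ S} => CellAdj x.1 y.1) x y

lemma rel_row_aux {i j : ℕ} : ∀ d : ℕ, ∀ (h1 : (i, j) ∈ skewCells mu lam)
    (h2 : (i, j + d) ∈ skewCells mu lam),
    Rel (skewCells mu lam) ⟨(i, j), h1⟩ ⟨(i, j + d), h2⟩ := by
  intro d
  induction d with
  | zero => intro h1 h2; exact Relation.EqvGen.refl _
  | succ n ih =>
    intro h1 h2
    have hm : (i, j + n) ∈ skewCells mu lam := by
      rw [mem_skew] at h1 h2 ⊢; omega
    refine Relation.EqvGen.trans _ _ _ (ih h1 hm) (Relation.EqvGen.rel _ _ ?_)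
    left
    exact ⟨rfl, Or.inr rfl⟩

lemma rel_row {i j j' : ℕ} (h1 : (i, j) ∈ skewCells mu lam)
    (h2 : (i, j') ∈ skewCells mu lam) :
    Rel (skewCells mu lam) ⟨(i, j), h1⟩ ⟨(i, j'), h2⟩ := by
  rcases le_total j j' with h | h
  · obtain ⟨d, rfl⟩ := Nat.le.dest h
    exact rel_row_aux d h1 h2
  · obtain ⟨d, rfl⟩ := Nat.le.dest h
    exact Relation.EqvGen.symm _ _ (rel_row_aux d h2 h1)

lemma leftcell_mem {i : ℕ} (h : mu.rowLen i < lam.rowLen i) :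
    (i, mu.rowLen i) ∈ skewCells mu lam := mem_skew.2 ⟨le_refl _, h⟩

lemma conn_row_nonempty {i : ℕ} (h : Conn mu lam i) :
    mu.rowLen i < lam.rowLen i ∧ mu.rowLen (i+1) < lam.rowLen (i+1) := by
  have h1 := lam.rowLen_anti i (i+1) (by omega)
  have h2 := mu.rowLen_anti i (i+1) (by omega)
  exact ⟨lt_of_lt_of_le h h1, lt_of_le_of_lt h2 h⟩

lemma conn_vert_cells {i : ℕ} (h : Conn mu lam i) :
    (i, mu.rowLen i) ∈ skewCells mu lam ∧ (i + 1, mu.rowLen i) ∈ skewCells mu lam := by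
  refine ⟨leftcell_mem (conn_row_nonempty h).1, mem_skew.2 ⟨?_, h⟩⟩
  exact mu.rowLen_anti i (i+1) (by omega)

/-- every cell is related to the leftmost cell of the start row of its row's component -/
lemma rel_to_start : ∀ i, ∀ j (h : (i, j) ∈ skewCells mu lam),
    ∃ h' : (start mu lam i, mu.rowLen (start mu lam i)) ∈ skewCells mu lam,
      Rel (skewCells mu lam) ⟨(i, j), h⟩
        ⟨(start mu lam i, mu.rowLen (start mu lam i)), h'⟩ := by
  intro i
  induction i with
  | zero =>
    intro j h
    have hne : mu.rowLen 0 < lam.rowLen 0 := by rw [mem_skew] at h; omega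
    exact ⟨leftcell_mem hne, by simpa [start] using rel_row h (leftcell_mem hne)⟩
  | succ n ih =>
    intro j h
    by_cases hc : Conn mu lam n
    · obtain ⟨htop, hbot⟩ := conn_vert_cells hc
      obtain ⟨h', hrel⟩ := ih (mu.rowLen n) htop
      rw [start_succ_of_conn hc]
      refine ⟨h', ?_⟩
      refine Relation.EqvGen.trans _ _ _ (rel_row h hbot) (Relation.EqvGen.trans _ _ _ ?_ hrel)
      refine Relation.EqvGen.symm _ _ (Relation.EqvGen.rel _ _ ?_)
      right
      exact ⟨rfl, Or.inr rfl⟩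
    · rw [start_succ_of_not_conn hc]
      have hne : mu.rowLen (n+1) < lam.rowLen (n+1) := by rw [mem_skew] at h; omega
      exact ⟨leftcell_mem hne, rel_row h (leftcell_mem hne)⟩

lemma start_eq_of_rel {x y : {c : ℕ × ℕ // c ∈ skewCells mu lam}}
    (h : Rel (skewCells mu lam) x y) : start mu lam x.1.1 = start mu lam y.1.1 := by
  induction h with
  | rel a b hab =>
    obtain ⟨⟨ai, aj⟩, ha⟩ := a
    obtain ⟨⟨bi, bj⟩, hb⟩ := b
    show start mu lam ai = start mu lam bi
    rcases hab with ⟨h1, _⟩ | ⟨h2, hv⟩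
    · simp only at h1; rw [h1]
    · simp only at h2
      subst h2
      rcases hv with hv | hv
      · simp only at hv
        subst hv
        exact start_succ_of_conn (conn_of_vert hb ha)
      · simp only at hv
        subst hv
        exact (start_succ_of_conn (conn_of_vert ha hb)).symm
  | refl a => rfl
  | symm a b _ ih => exact ih.symm
  | trans a b c _ _ ih1 ih2 => exact ih1.trans ih2

lemma rel_of_start_eq {x y : {c : ℕ × ℕ // c ∈ skewCells mu lam}}
    (h : start mu lam x.1.1 = start mu lam y.1.1) : Rel (skewCells mu lam) x y := by
  obtain ⟨⟨xi, xj⟩, hx⟩ := x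
  obtain ⟨⟨yi, yj⟩, hy⟩ := y
  have h' : start mu lam xi = start mu lam yi := h
  obtain ⟨h1, r1⟩ := rel_to_start xi xj hx
  obtain ⟨h2, r2⟩ := rel_to_start yi yj hy
  have he : (⟨(start mu lam xi, mu.rowLen (start mu lam xi)), h1⟩ :
      {c : ℕ × ℕ // c ∈ skewCells mu lam}) =
      ⟨(start mu lam yi, mu.rowLen (start mu lam yi)), h2⟩ := Subtype.ext (by
        show (start mu lam xi, mu.rowLen (start mu lam xi)) =
          (start mu lam yi, mu.rowLen (start mu lam yi))
        rw [h'])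
  exact Relation.EqvGen.trans _ _ _ r1 (he ▸ Relation.EqvGen.symm _ _ r2)

-- chunk 2 (to be appended inside namespace KNE, needs real defs SkewComponents etc.)
variable (mu lam)

/-- set of start-rows of components -/
def startsF : Finset ℕ := (skewCells mu lam).image (fun c => start mu lam c.1)

def colPairsF : Finset (ℕ × ℕ) := (skewCells mu lam).image (fun c => (start mu lam c.1, c.2))

/-- cells with no cell directly above (within the skew diagram) -/
def noAb (c : ℕ × ℕ) : Prop := ∀ i' : ℕ, i' + 1 = c.1 → (i', c.2) ∉ skewCells mu lam

def NVset : Finset (ℕ × ℕ) := (skewCells mu lam).filter (noAb mu lam)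

def Eset : Finset (ℕ × ℕ) :=
  (skewCells mu lam).filter (fun c => noAb mu lam c ∧ (c.1, c.2 + 1) ∉ skewCells mu lam)

def Hset : Finset (ℕ × ℕ) :=
  (skewCells mu lam).filter (fun c => (c.1, c.2 + 1) ∈ skewCells mu lam)

variable {mu lam}

/-- the quotient map to start rows, as an equiv -/
noncomputable def compEquiv :
    SkewComponents (skewCells mu lam) ≃ {a : ℕ // a ∈ startsF mu lam} := by
  refine Equiv.ofBijective
    (Quotient.lift (fun c : {c : ℕ × ℕ // c ∈ skewCells mu lam} =>
      (⟨start mu lam c.1.1, Finset.mem_image.2 ⟨c.1, c.2, rfl⟩⟩ : {a : ℕ // a ∈ startsF mu lam}))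
      (fun a b hab => Subtype.ext (start_eq_of_rel hab))) ⟨?_, ?_⟩
  · intro q q'
    induction q using Quotient.ind
    induction q' using Quotient.ind
    intro h
    exact Quotient.sound (rel_of_start_eq (congrArg Subtype.val h))
  · rintro ⟨a, ha⟩
    obtain ⟨c, hc, hac⟩ := Finset.mem_image.1 ha
    exact ⟨Quotient.mk _ ⟨c, hc⟩, Subtype.ext hac⟩

lemma ribSet_eq : ribSet (skewCells mu lam) = (startsF mu lam).card := by
  rw [ribSet, Nat.card_congr compEquiv, Nat.card_eq_finsetCard]

noncomputable def colPairsEquiv :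
    componentColPairs (skewCells mu lam) ≃ {p : ℕ × ℕ // p ∈ colPairsF mu lam} := by
  refine Equiv.ofBijective (fun x => ⟨((compEquiv x.1.1).1, x.1.2), ?_⟩) ⟨?_, ?_⟩
  · obtain ⟨⟨q, col⟩, c, hc1, hc2⟩ := x
    refine Finset.mem_image.2 ⟨c.1, c.2, ?_⟩
    show (start mu lam c.1.1, c.1.2) = ((compEquiv q).1, col)
    simp only at hc1 hc2
    have h1 : (compEquiv (mu := mu) (lam := lam) q).1 = start mu lam c.1.1 := by
      rw [← hc1]; rfl
    have h2 : c.1.2 = col := hc2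
    rw [h1, h2]
  · rintro ⟨⟨q, col⟩, hp⟩ ⟨⟨q', col'⟩, hp'⟩ h
    simp only [Subtype.mk.injEq, Prod.mk.injEq] at h
    have h1 : q = q' := compEquiv.injective (Subtype.ext h.1)
    exact Subtype.ext (Prod.ext h1 h.2)
  · rintro ⟨⟨a, b⟩, hab⟩
    obtain ⟨c, hc, hac⟩ := Finset.mem_image.1 hab
    refine ⟨⟨(Quotient.mk _ ⟨c, hc⟩, b), ⟨⟨c, hc⟩, rfl, ?_⟩⟩, ?_⟩
    · exact (Prod.ext_iff.1 hac).2
    · refine Subtype.ext (Prod.ext ?_ rfl)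
      simp only [compEquiv, Equiv.ofBijective_apply, Quotient.lift_mk]
      exact (Prod.ext_iff.1 hac).1

lemma card_colPairs : Nat.card (componentColPairs (skewCells mu lam)) = (colPairsF mu lam).card := by
  rw [Nat.card_congr colPairsEquiv, Nat.card_eq_finsetCard]

lemma mem_Eset {c : ℕ × ℕ} (hc : c ∈ Eset mu lam) :
    c ∈ skewCells mu lam ∧ noAb mu lam c ∧ (c.1, c.2 + 1) ∉ skewCells mu lam := by
  simpa [Eset] using hc

lemma Eset_col {c : ℕ × ℕ} (hc : c ∈ Eset mu lam) : c.2 = lam.rowLen c.1 - 1 := by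
  obtain ⟨h1, _, h3⟩ := mem_Eset hc
  rw [mem_skew] at h1
  rw [show ((c.1, c.2 + 1) ∈ skewCells mu lam) = (mu.rowLen c.1 ≤ c.2 + 1 ∧ c.2 + 1 < lam.rowLen c.1) from propext mem_skew] at h3
  omega

lemma Eset_start {c : ℕ × ℕ} (hc : c ∈ Eset mu lam) : start mu lam c.1 = c.1 := by
  obtain ⟨h1, h2, _⟩ := mem_Eset hc
  have hcol := Eset_col hc
  obtain ⟨i, j⟩ := c
  simp only at hcol
  cases i with
  | zero => rfl
  | succ t =>
    refine start_succ_of_not_conn (fun hconn : mu.rowLen t < lam.rowLen (t+1) => h2 t rfl ?_)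
    rw [mem_skew] at h1 ⊢
    simp only at h1 hcol ⊢
    have := lam.rowLen_anti t (t+1) (by omega)
    omega

lemma startsF_eq_Eset_card : (startsF mu lam).card = (Eset mu lam).card := by
  refine (Finset.card_bij (fun c _ => start mu lam c.1) ?_ ?_ ?_).symm
  · intro c hc
    exact Finset.mem_image.2 ⟨c, (mem_Eset hc).1, rfl⟩
  · intro c hc d hd h
    have e1 := Eset_start hc
    have e2 := Eset_start hd
    have e3 := Eset_col hc
    have e4 := Eset_col hd
    have hfst : c.1 = d.1 := by rw [← e1, ← e2, h]
    have hsnd : c.2 = d.2 := by rw [e3, e4, hfst]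
    exact Prod.ext hfst hsnd
  · intro a ha
    obtain ⟨c, hc, hac⟩ := Finset.mem_image.1 ha
    obtain ⟨i, j⟩ := c
    obtain ⟨hmem, -⟩ := rel_to_start (mu := mu) (lam := lam) i j hc
    rw [mem_skew] at hmem
    -- show the cell (a, lam.rowLen a - 1) is in Eset and has start = a
    have hstart : start mu lam a = a := by rw [← hac, start_start]
    simp only at hac
    rw [hac] at hmem
    have hane : mu.rowLen a < lam.rowLen a := by omega
    have hcell : (a, lam.rowLen a - 1) ∈ skewCells mu lam := by rw [mem_skew]; omega
    refine ⟨(a, lam.rowLen a - 1), Finset.mem_filter.2 ⟨hcell, ?_, ?_⟩, ?_⟩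
    · intro i' hi' hmem'
      simp only at hi' hmem'
      have hc2 : Conn mu lam i' := by
        rw [mem_skew] at hmem'
        have : lam.rowLen (i' + 1) = lam.rowLen a := by rw [hi']
        simp only [Conn, hi']
        omega
      rw [← hi'] at hstart
      exact not_conn_of_start_self hstart hc2
    · rw [mem_skew]
      simp only
      omega
    · simp only
      rw [hstart]

lemma Hset_subset_NVset (hbr : IsBrokenRibbon mu lam) : Hset mu lam ⊆ NVset mu lam := by
  intro c hc
  obtain ⟨h1, h2⟩ := Finset.mem_filter.1 hc
  refine Finset.mem_filter.2 ⟨h1, fun i' hi' hmem => ?_⟩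
  apply hbr i' c.2
  have hup : (i', c.2 + 1) ∈ skewCells mu lam := by
    rw [mem_skew] at hmem h2 ⊢
    have := lam.rowLen_anti i' c.1 (by omega)
    omega
  rw [hi']
  exact ⟨hmem, hup, (by rw [show (c.1, c.2) = c from rfl]; exact h1), h2⟩

lemma NVset_eq (hbr : IsBrokenRibbon mu lam) :
    NVset mu lam = Eset mu lam ∪ Hset mu lam := by
  ext c
  simp only [NVset, Eset, Hset, Finset.mem_union, Finset.mem_filter]
  constructor
  · intro ⟨h1, h2⟩
    by_cases hr : (c.1, c.2 + 1) ∈ skewCells mu lam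
    · exact Or.inr ⟨h1, hr⟩
    · exact Or.inl ⟨h1, h2, hr⟩
  · rintro (⟨h1, h2, _⟩ | ⟨h1, h2⟩)
    · exact ⟨h1, h2⟩
    · have := Hset_subset_NVset hbr (Finset.mem_filter.2 ⟨h1, h2⟩)
      exact Finset.mem_filter.1 this

lemma NVset_card (hbr : IsBrokenRibbon mu lam) :
    (NVset mu lam).card = (Eset mu lam).card + (Hset mu lam).card := by
  rw [NVset_eq hbr]
  rw [Finset.card_union_of_disjoint]
  rw [Finset.disjoint_left]
  intro c hc hc'
  exact (mem_Eset hc).2.2 (Finset.mem_filter.1 hc').2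

/-- topmost cell of a column -/
lemma top_of_col : ∀ i b, (i, b) ∈ skewCells mu lam →
    ∃ t, ∃ h : (t, b) ∈ skewCells mu lam, noAb mu lam (t, b) ∧ start mu lam t = start mu lam i := by
  intro i
  induction i with
  | zero =>
    intro b hb
    exact ⟨0, hb, fun i' hi' => (Nat.succ_ne_zero i' hi').elim, rfl⟩
  | succ n ih =>
    intro b hb
    by_cases hup : (n, b) ∈ skewCells mu lam
    · obtain ⟨t, ht, hna, hst⟩ := ih b hup
      refine ⟨t, ht, hna, ?_⟩
      rw [hst, start_succ_of_conn (conn_of_vert hup hb)]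
    · refine ⟨n + 1, hb, fun i' hi' => ?_, rfl⟩
      simp only at hi'
      have : i' = n := by omega
      rw [this]
      exact hup

lemma colPairsF_eq_NVset_card : (colPairsF mu lam).card = (NVset mu lam).card := by
  refine (Finset.card_bij (fun c _ => (start mu lam c.1, c.2)) ?_ ?_ ?_).symm
  · intro c hc
    exact Finset.mem_image.2 ⟨c, (Finset.mem_filter.1 hc).1, rfl⟩
  · intro c hc d hd h
    obtain ⟨hc1, hc2⟩ := Finset.mem_filter.1 hc
    obtain ⟨hd1, hd2⟩ := Finset.mem_filter.1 hd
    have hcol : c.2 = d.2 := (Prod.ext_iff.1 h).2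
    obtain ⟨i, j⟩ := c
    obtain ⟨i', j'⟩ := d
    simp only at hcol hc1 hc2 hd1 hd2
    subst hcol
    rcases lt_trichotomy i i' with hlt | heq | hgt
    · exfalso
      exact hd2 (i' - 1) (by simp only; omega) (by
        have := col_contig hc1 hd1 (show i ≤ i' - 1 by omega) (show i' - 1 ≤ i' by omega)
        simpa using this)
    · rw [heq]
    · exfalso
      exact hc2 (i - 1) (by simp only; omega) (by
        have := col_contig hd1 hc1 (show i' ≤ i - 1 by omega) (show i - 1 ≤ i by omega)
        simpa using this)
  · intro p hp
    obtain ⟨c, hc, hpc⟩ := Finset.mem_image.1 hp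
    obtain ⟨i, j⟩ := c
    obtain ⟨t, ht, hna, hst⟩ := top_of_col i j hc
    refine ⟨(t, j), Finset.mem_filter.2 ⟨ht, hna⟩, ?_⟩
    simp only
    rw [hst]
    exact hpc

lemma rib_eq : rib mu lam = (Eset mu lam).card := by
  rw [rib, ribSet_eq, startsF_eq_Eset_card]

lemma wt_eq (hbr : IsBrokenRibbon mu lam) : wt mu lam = (Hset mu lam).card := by
  rw [wt, wtSet, card_colPairs, colPairsF_eq_NVset_card, NVset_card hbr, ← rib, rib_eq]
  omega

/-! ### rank lemmas -/

def rk (X : Finset (ℕ × ℕ)) (κ : ℕ × ℕ → ℕ) (c : ℕ × ℕ) : ℕ :=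
  (X.filter (fun d => κ d < κ c)).card

lemma rk_lt {X : Finset (ℕ × ℕ)} {κ : ℕ × ℕ → ℕ} {c : ℕ × ℕ} (hc : c ∈ X) :
    rk X κ c < X.card := by
  apply Finset.card_lt_card
  refine ⟨Finset.filter_subset _ _, fun hsub => ?_⟩
  have := Finset.mem_filter.1 (hsub hc)
  omega

lemma rk_strictMono {X : Finset (ℕ × ℕ)} {κ : ℕ × ℕ → ℕ} {c d : ℕ × ℕ}
    (hc : c ∈ X) (h : κ c < κ d) : rk X κ c < rk X κ d := by
  apply Finset.card_lt_card
  constructor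
  · intro e he
    obtain ⟨he1, he2⟩ := Finset.mem_filter.1 he
    exact Finset.mem_filter.2 ⟨he1, by omega⟩
  · intro hsub
    have := Finset.mem_filter.1 (hsub (Finset.mem_filter.2 ⟨hc, h⟩))
    omega

lemma rk_injOn {X : Finset (ℕ × ℕ)} {κ : ℕ × ℕ → ℕ}
    (hinj : ∀ c ∈ X, ∀ d ∈ X, κ c = κ d → c = d) {c d : ℕ × ℕ}
    (hc : c ∈ X) (hd : d ∈ X) (h : rk X κ c = rk X κ d) : c = d := by
  rcases lt_trichotomy (κ c) (κ d) with hlt | heq | hgt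
  · exact absurd h (Nat.ne_of_lt (rk_strictMono hc hlt))
  · exact hinj c hc d hd heq
  · exact absurd h.symm (Nat.ne_of_lt (rk_strictMono hd hgt))

lemma rk_image {X : Finset (ℕ × ℕ)} {κ : ℕ × ℕ → ℕ}
    (hinj : ∀ c ∈ X, ∀ d ∈ X, κ c = κ d → c = d) :
    X.image (rk X κ) = Finset.range X.card := by
  apply Finset.eq_of_subset_of_card_le
  · intro v hv
    obtain ⟨c, hc, rfl⟩ := Finset.mem_image.1 hv
    exact Finset.mem_range.2 (rk_lt hc)
  · rw [Finset.card_range, Finset.card_image_of_injOn (fun c hc d hd => rk_injOn hinj hc hd)]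

lemma rk_exists_unique {X : Finset (ℕ × ℕ)} {κ : ℕ × ℕ → ℕ}
    (hinj : ∀ c ∈ X, ∀ d ∈ X, κ c = κ d → c = d) {v : ℕ} (hv : v < X.card) :
    ∃! c, c ∈ X ∧ rk X κ c = v := by
  have : v ∈ X.image (rk X κ) := by rw [rk_image hinj]; exact Finset.mem_range.2 hv
  obtain ⟨c, hc, hcv⟩ := Finset.mem_image.1 this
  exact ⟨c, ⟨hc, hcv⟩, fun d ⟨hd, hdv⟩ => rk_injOn hinj hd hc (hdv.trans hcv.symm)⟩

/-! ### column injectivity on NV cells, row injectivity on non-H cells -/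

lemma nv_col_inj {c d : ℕ × ℕ} (hc : c ∈ NVset mu lam) (hd : d ∈ NVset mu lam)
    (h : c.2 = d.2) : c = d := by
  obtain ⟨hc1, hc2⟩ := Finset.mem_filter.1 hc
  obtain ⟨hd1, hd2⟩ := Finset.mem_filter.1 hd
  obtain ⟨i, j⟩ := c
  obtain ⟨i', j'⟩ := d
  simp only at h
  subst h
  rcases lt_trichotomy i i' with hlt | heq | hgt
  · exact absurd (col_contig hc1 hd1 (show i ≤ i' - 1 by omega) (show i' - 1 ≤ i' by omega))
      (hd2 (i' - 1) (by simp only; omega))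
  · rw [heq]
  · exact absurd (col_contig hd1 hc1 (show i' ≤ i - 1 by omega) (show i - 1 ≤ i by omega))
      (hc2 (i - 1) (by simp only; omega))

lemma noH_col {c : ℕ × ℕ} (hc : c ∈ skewCells mu lam) (hH : c ∉ Hset mu lam) :
    c.2 = lam.rowLen c.1 - 1 := by
  simp only [Hset, Finset.mem_filter, not_and] at hH
  have h3 := hH hc
  rw [mem_skew] at hc
  rw [show ((c.1, c.2 + 1) ∈ skewCells mu lam) =
    (mu.rowLen c.1 ≤ c.2 + 1 ∧ c.2 + 1 < lam.rowLen c.1) from propext mem_skew] at h3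
  omega

lemma noH_row_inj {c d : ℕ × ℕ} (hc : c ∈ skewCells mu lam) (hd : d ∈ skewCells mu lam)
    (hcH : c ∉ Hset mu lam) (hdH : d ∉ Hset mu lam) (h : c.1 = d.1) : c = d := by
  have h1 := noH_col hc hcH
  have h2 := noH_col hd hdH
  obtain ⟨i, j⟩ := c
  obtain ⟨i', j'⟩ := d
  simp only at h1 h2 h
  subst h
  rw [Prod.mk.injEq]
  exact ⟨rfl, by omega⟩

/-! ### the top-left corner cell -/

variable (mu lam)

def topRow : ℕ := sInf {i | ∃ j, (i, j) ∈ skewCells mu lam}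

def c0 : ℕ × ℕ := (topRow mu lam, lam.rowLen (topRow mu lam) - 1)

variable {mu lam}

lemma topRow_spec (hne : (skewCells mu lam).Nonempty) :
    ∃ j, (topRow mu lam, j) ∈ skewCells mu lam := by
  obtain ⟨⟨i, j⟩, hij⟩ := hne
  exact Nat.sInf_mem (⟨i, ⟨j, hij⟩⟩ : Set.Nonempty {i | ∃ j, (i, j) ∈ skewCells mu lam})

lemma topRow_le {c : ℕ × ℕ} (hc : c ∈ skewCells mu lam) : topRow mu lam ≤ c.1 :=
  Nat.sInf_le ⟨c.2, by obtain ⟨i,j⟩ := c; exact hc⟩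

lemma c0_mem (hne : (skewCells mu lam).Nonempty) : c0 mu lam ∈ skewCells mu lam := by
  obtain ⟨j, hj⟩ := topRow_spec hne
  rw [mem_skew] at hj ⊢
  simp only [c0]
  omega

lemma c0_not_H (hne : (skewCells mu lam).Nonempty) : c0 mu lam ∉ Hset mu lam := by
  intro h
  obtain ⟨h1, h2⟩ := Finset.mem_filter.1 h
  rw [mem_skew] at h2
  simp only [c0] at h2
  have := c0_mem hne
  rw [mem_skew] at this
  simp only [c0] at this
  omega

lemma c0_E (hne : (skewCells mu lam).Nonempty) : c0 mu lam ∈ Eset mu lam := by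
  have hm := c0_mem hne
  refine Finset.mem_filter.2 ⟨hm, fun i' hi' hmem => ?_, fun hr => ?_⟩
  · exact absurd (topRow_le hmem) (by simp only [c0] at hi' ⊢; omega)
  · rw [mem_skew] at hr hm
    simp only [c0] at hr hm
    omega

lemma ne1_cell_eq (hne : (skewCells mu lam).Nonempty) {i j : ℕ}
    (h1 : (i, j) ∈ skewCells mu lam) (h2 : ∀ c ∈ skewCells mu lam, i ≤ c.1)
    (h3 : ∀ j' : ℕ, (i, j') ∈ skewCells mu lam → j' ≤ j) : (i, j) = c0 mu lam := by
  have hi : i = topRow mu lam := le_antisymm (h2 _ (c0_mem hne)) (topRow_le h1)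
  subst hi
  have hm := c0_mem hne
  have hle := h3 _ hm
  rw [mem_skew] at h1 hm
  simp only [c0] at hle hm ⊢
  rw [Prod.mk.injEq]
  exact ⟨rfl, by omega⟩

/-! ### construction of the tableau from a selection of free cells -/

def Aset (mu lam : YoungDiagram) (Sel : Finset (ℕ × ℕ)) : Finset (ℕ × ℕ) := Hset mu lam ∪ Sel

def Bset (mu lam : YoungDiagram) (Sel : Finset (ℕ × ℕ)) : Finset (ℕ × ℕ) :=
  ((skewCells mu lam) \ Aset mu lam Sel).erase (c0 mu lam)

def entryOf (mu lam : YoungDiagram) (k : ℕ) (Sel : Finset (ℕ × ℕ)) (c : ℕ × ℕ) : ℕ :=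
  if c ∈ Aset mu lam Sel then rk (Aset mu lam Sel) Prod.snd c + 1
  else if c = c0 mu lam then k
  else if c ∈ skewCells mu lam then k + 1 + rk (Bset mu lam Sel) Prod.fst c
  else 0

section Constr

variable {mu lam : YoungDiagram} {k : ℕ} {Sel : Finset (ℕ × ℕ)}

lemma E_sub : Eset mu lam ⊆ skewCells mu lam := Finset.filter_subset _ _

lemma H_sub : Hset mu lam ⊆ skewCells mu lam := Finset.filter_subset _ _

lemma E_sub_NV : Eset mu lam ⊆ NVset mu lam := fun c hc =>
  Finset.mem_filter.2 ⟨(mem_Eset hc).1, (mem_Eset hc).2.1⟩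

lemma E_H_disj {c : ℕ × ℕ} (h1 : c ∈ Eset mu lam) (h2 : c ∈ Hset mu lam) : False :=
  (mem_Eset h1).2.2 (Finset.mem_filter.1 h2).2

lemma A_sub_S (hSel : Sel ⊆ (Eset mu lam).erase (c0 mu lam)) : Aset mu lam Sel ⊆ skewCells mu lam := by
  intro c hc
  rcases Finset.mem_union.1 hc with h | h
  · exact H_sub h
  · exact E_sub (Finset.mem_of_mem_erase (hSel h))

lemma A_sub_NV (hbr : IsBrokenRibbon mu lam) (hSel : Sel ⊆ (Eset mu lam).erase (c0 mu lam)) : Aset mu lam Sel ⊆ NVset mu lam := by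
  intro c hc
  rcases Finset.mem_union.1 hc with h | h
  · exact Hset_subset_NVset hbr h
  · exact E_sub_NV (Finset.mem_of_mem_erase (hSel h))

lemma A_inj (hbr : IsBrokenRibbon mu lam) (hSel : Sel ⊆ (Eset mu lam).erase (c0 mu lam)) : ∀ c ∈ Aset mu lam Sel, ∀ d ∈ Aset mu lam Sel, c.2 = d.2 → c = d :=
  fun c hc d hd h => nv_col_inj (A_sub_NV hbr hSel hc) (A_sub_NV hbr hSel hd) h

lemma c0_not_A (hne : (skewCells mu lam).Nonempty) (hSel : Sel ⊆ (Eset mu lam).erase (c0 mu lam)) : c0 mu lam ∉ Aset mu lam Sel := by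
  intro h
  rcases Finset.mem_union.1 h with h | h
  · exact c0_not_H hne h
  · exact (Finset.mem_erase.1 (hSel h)).1 rfl

lemma mem_B {c : ℕ × ℕ} :
    c ∈ Bset mu lam Sel ↔ c ∈ skewCells mu lam ∧ c ∉ Aset mu lam Sel ∧ c ≠ c0 mu lam := by
  simp only [Bset, Finset.mem_erase, Finset.mem_sdiff]
  tauto

lemma partitionS (hSel : Sel ⊆ (Eset mu lam).erase (c0 mu lam)) {c : ℕ × ℕ} (hc : c ∈ skewCells mu lam) :
    c ∈ Aset mu lam Sel ∨ c = c0 mu lam ∨ c ∈ Bset mu lam Sel := by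
  by_cases h1 : c ∈ Aset mu lam Sel
  · exact Or.inl h1
  by_cases h2 : c = c0 mu lam
  · exact Or.inr (Or.inl h2)
  · exact Or.inr (Or.inr (mem_B.2 ⟨hc, h1, h2⟩))

lemma B_not_H {c : ℕ × ℕ} (hc : c ∈ Bset mu lam Sel) : c ∉ Hset mu lam :=
  fun h => (mem_B.1 hc).2.1 (Finset.mem_union.2 (Or.inl h))

lemma B_inj (hSel : Sel ⊆ (Eset mu lam).erase (c0 mu lam)) : ∀ c ∈ Bset mu lam Sel, ∀ d ∈ Bset mu lam Sel, c.1 = d.1 → c = d :=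
  fun c hc d hd h => noH_row_inj (mem_B.1 hc).1 (mem_B.1 hd).1 (B_not_H hc) (B_not_H hd) h

lemma cardA (hSel : Sel ⊆ (Eset mu lam).erase (c0 mu lam)) : (Aset mu lam Sel).card = Sel.card + (Hset mu lam).card := by
  rw [Aset, Finset.union_comm, Finset.card_union_of_disjoint]
  rw [Finset.disjoint_left]
  exact fun c hc hc' => E_H_disj (Finset.mem_of_mem_erase (hSel hc)) hc'


lemma cardA' (hSel : Sel ⊆ (Eset mu lam).erase (c0 mu lam)) (hcard : Sel.card + (Hset mu lam).card = k - 1) : (Aset mu lam Sel).card = k - 1 := by rw [cardA hSel, hcard]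

lemma cardB (hk1 : 1 ≤ k) (hkr : k ≤ skewSize mu lam) (hne : (skewCells mu lam).Nonempty) (hSel : Sel ⊆ (Eset mu lam).erase (c0 mu lam)) (hcard : Sel.card + (Hset mu lam).card = k - 1) : (Bset mu lam Sel).card + k = skewSize mu lam := by
  have h1 : (Bset mu lam Sel).card = ((skewCells mu lam) \ Aset mu lam Sel).card - 1 := by
    rw [Bset, Finset.card_erase_of_mem]
    rw [Finset.mem_sdiff]
    exact ⟨c0_mem hne, c0_not_A hne hSel⟩
  have h2 : ((skewCells mu lam) \ Aset mu lam Sel).card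
      = skewSize mu lam - (k - 1) := by
    rw [Finset.card_sdiff_of_subset (A_sub_S hSel), cardA' hSel hcard]
    rfl
  have h3 : (0:ℕ) < ((skewCells mu lam) \ Aset mu lam Sel).card := by
    rw [Finset.card_pos]
    exact ⟨c0 mu lam, Finset.mem_sdiff.2 ⟨c0_mem hne, c0_not_A hne hSel⟩⟩
  omega

lemma entry_A {c : ℕ × ℕ} (hc : c ∈ Aset mu lam Sel) :
    entryOf mu lam k Sel c = rk (Aset mu lam Sel) Prod.snd c + 1 := by
  rw [entryOf, if_pos hc]

lemma entry_A_le (hSel : Sel ⊆ (Eset mu lam).erase (c0 mu lam)) (hcard : Sel.card + (Hset mu lam).card = k - 1) {c : ℕ × ℕ} (hc : c ∈ Aset mu lam Sel) :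
    entryOf mu lam k Sel c ≤ k - 1 := by
  rw [entry_A hc]
  have := rk_lt (κ := Prod.snd) hc
  rw [cardA' hSel hcard] at this
  omega

lemma entry_c0 (hne : (skewCells mu lam).Nonempty) (hSel : Sel ⊆ (Eset mu lam).erase (c0 mu lam)) : entryOf mu lam k Sel (c0 mu lam) = k := by
  rw [entryOf, if_neg (c0_not_A hne hSel), if_pos rfl]

lemma entry_B (hSel : Sel ⊆ (Eset mu lam).erase (c0 mu lam)) {c : ℕ × ℕ} (hc : c ∈ Bset mu lam Sel) :
    entryOf mu lam k Sel c = k + 1 + rk (Bset mu lam Sel) Prod.fst c := by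
  obtain ⟨h1, h2, h3⟩ := mem_B.1 hc
  rw [entryOf, if_neg h2, if_neg h3, if_pos h1]

lemma entry_B_bounds (hk1 : 1 ≤ k) (hkr : k ≤ skewSize mu lam) (hne : (skewCells mu lam).Nonempty) (hSel : Sel ⊆ (Eset mu lam).erase (c0 mu lam)) (hcard : Sel.card + (Hset mu lam).card = k - 1) {c : ℕ × ℕ} (hc : c ∈ Bset mu lam Sel) :
    k < entryOf mu lam k Sel c ∧ entryOf mu lam k Sel c ≤ skewSize mu lam := by
  rw [entry_B hSel hc]
  have h1 := rk_lt (κ := Prod.fst) hc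
  have h2 := cardB hk1 hkr hne hSel hcard
  omega

/-- the standard Young tableau associated to a selection -/
def consT (hbr : IsBrokenRibbon mu lam) (hne : (skewCells mu lam).Nonempty) (hSel : Sel ⊆ (Eset mu lam).erase (c0 mu lam)) (hcard : Sel.card + (Hset mu lam).card = k - 1) (hk1 : 1 ≤ k) (hkr : k ≤ skewSize mu lam) : SkewSYT mu lam where
  entry := entryOf mu lam k Sel
  zeros := by
    intro c hc
    rw [entryOf, if_neg (fun h => hc (A_sub_S hSel h)),
      if_neg (fun h => hc (by rw [h]; exact c0_mem hne)), if_neg hc]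
  mem := by
    intro c hc
    rcases partitionS (hSel := hSel) hc with h | h | h
    · have h1 := entry_A_le hSel hcard h
      rw [entry_A h] at h1 ⊢
      have := hk1
      have := hkr
      exact ⟨by omega, by omega⟩
    · rw [h, entry_c0 hne hSel]
      exact ⟨hk1, hkr⟩
    · have := entry_B_bounds hk1 hkr hne hSel hcard h
      omega
  bij := by
    intro v hv1 hv2
    rcases lt_trichotomy v k with hv | hv | hv
    · have hvA : v - 1 < (Aset mu lam Sel).card := by rw [cardA' hSel hcard]; omega
      obtain ⟨c, ⟨hcA, hrk⟩, huniq⟩ := rk_exists_unique (A_inj hbr hSel) hvA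
      refine ⟨c, ⟨A_sub_S hSel hcA, by rw [entry_A hcA, hrk]; omega⟩, ?_⟩
      rintro d ⟨hdS, hde⟩
      have hdA : d ∈ Aset mu lam Sel := by
        rcases partitionS (hSel := hSel) hdS with h | h | h
        · exact h
        · rw [h, entry_c0 hne hSel] at hde; omega
        · have := entry_B_bounds hk1 hkr hne hSel hcard h; omega
      refine huniq d ⟨hdA, ?_⟩
      rw [entry_A hdA] at hde
      omega
    · refine ⟨c0 mu lam, ⟨c0_mem hne, by rw [entry_c0 hne hSel, hv]⟩, ?_⟩
      rintro d ⟨hdS, hde⟩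
      rcases partitionS (hSel := hSel) hdS with h | h | h
      · have := entry_A_le hSel hcard h; omega
      · exact h
      · have := entry_B_bounds hk1 hkr hne hSel hcard h; omega
    · have hvB : v - k - 1 < (Bset mu lam Sel).card := by
        have := cardB hk1 hkr hne hSel hcard; omega
      obtain ⟨c, ⟨hcB, hrk⟩, huniq⟩ := rk_exists_unique (B_inj (hSel := hSel)) hvB
      refine ⟨c, ⟨(mem_B.1 hcB).1, by rw [entry_B hSel hcB, hrk]; omega⟩, ?_⟩
      rintro d ⟨hdS, hde⟩
      have hdB : d ∈ Bset mu lam Sel := by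
        rcases partitionS (hSel := hSel) hdS with h | h | h
        · have := entry_A_le hSel hcard h; omega
        · rw [h, entry_c0 hne hSel] at hde; omega
        · exact h
      refine huniq d ⟨hdB, ?_⟩
      rw [entry_B hSel hdB] at hde
      omega
  rowStrict := by
    intro i j hc hd
    have hcH : (i, j) ∈ Hset mu lam := Finset.mem_filter.2 ⟨hc, hd⟩
    have hcA : (i, j) ∈ Aset mu lam Sel := Finset.mem_union.2 (Or.inl hcH)
    rcases partitionS (hSel := hSel) hd with h | h | h
    · rw [entry_A hcA, entry_A h]
      have := rk_strictMono (κ := Prod.snd) (d := (i, j+1)) hcA (by simp)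
      omega
    · rw [h, entry_c0 hne hSel]
      have := entry_A_le hSel hcard hcA
      rw [h] at hd
      omega
    · have h1 := entry_A_le hSel hcard hcA
      have h2 := (entry_B_bounds hk1 hkr hne hSel hcard h).1
      omega
  colStrict := by
    intro i j hc hd
    have hdB : (i + 1, j) ∈ Bset mu lam Sel := by
      have hnotNV : (i + 1, j) ∉ NVset mu lam := by
        intro h
        exact (Finset.mem_filter.1 h).2 i rfl hc
      refine mem_B.2 ⟨hd, fun h => hnotNV (A_sub_NV hbr hSel h), fun h => hnotNV ?_⟩
      rw [h]
      exact E_sub_NV (c0_E hne)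
    rcases partitionS (hSel := hSel) hc with h | h | h
    · have h1 := entry_A_le hSel hcard h
      have h2 := (entry_B_bounds hk1 hkr hne hSel hcard hdB).1
      omega
    · rw [h, entry_c0 hne hSel]
      exact (entry_B_bounds hk1 hkr hne hSel hcard hdB).1
    · rw [entry_B hSel h, entry_B hSel hdB]
      have := rk_strictMono (κ := Prod.fst) (d := (i+1, j)) h (by simp)
      omega

lemma consT_KNE (hbr : IsBrokenRibbon mu lam) (hne : (skewCells mu lam).Nonempty) (hSel : Sel ⊆ (Eset mu lam).erase (c0 mu lam)) (hcard : Sel.card + (Hset mu lam).card = k - 1) (hk1 : 1 ≤ k) (hkr : k ≤ skewSize mu lam) : HasKNE (consT hbr hne hSel hcard hk1 hkr) k := by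
  refine ⟨?_, ?_, ?_⟩
  · intro i j h1 h2 h3
    have := ne1_cell_eq hne h1 h2 h3
    show entryOf mu lam k Sel (i, j) = k
    rw [this]
    exact entry_c0 hne hSel
  · intro c hcS d hdS h1 h2
    simp only [consT] at h1 h2
    have hdA : d ∈ Aset mu lam Sel := by
      rcases partitionS (hSel := hSel) hdS with h | h | h
      · exact h
      · rw [h, entry_c0 hne hSel] at h2; omega
      · have := (entry_B_bounds hk1 hkr hne hSel hcard h).1; omega
    have hcA : c ∈ Aset mu lam Sel := by
      rcases partitionS (hSel := hSel) hcS with h | h | h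
      · exact h
      · rw [h, entry_c0 hne hSel] at h1; omega
      · have := (entry_B_bounds hk1 hkr hne hSel hcard h).1; omega
    rcases lt_trichotomy c.2 d.2 with h | h | h
    · exact h
    · exact absurd (congrArg (entryOf mu lam k Sel) (A_inj hbr hSel c hcA d hdA h)) (by omega)
    · rw [entry_A hcA, entry_A hdA] at h1
      have := rk_strictMono (κ := Prod.snd) hdA h
      omega
  · intro c hcS d hdS h1 h2
    simp only [consT] at h1 h2
    have hcB : c ∈ Bset mu lam Sel := by
      rcases partitionS (hSel := hSel) hcS with h | h | h
      · have := entry_A_le hSel hcard h; omega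
      · rw [h, entry_c0 hne hSel] at h1; omega
      · exact h
    have hdB : d ∈ Bset mu lam Sel := by
      rcases partitionS (hSel := hSel) hdS with h | h | h
      · have := entry_A_le hSel hcard h
        have := (entry_B_bounds hk1 hkr hne hSel hcard hcB).1
        omega
      · rw [h, entry_c0 hne hSel] at h2
        have := (entry_B_bounds hk1 hkr hne hSel hcard hcB).1
        omega
      · exact h
    rcases lt_trichotomy c.1 d.1 with h | h | h
    · exact h
    · exact absurd (congrArg (entryOf mu lam k Sel) (B_inj (hSel := hSel) c hcB d hdB h)) (by omega)
    · rw [entry_B hSel hcB, entry_B hSel hdB] at h2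
      have := rk_strictMono (κ := Prod.fst) hdB h
      omega

end Constr

/-! ### from a k-NE tableau to a selection -/

section Forward

variable {mu lam : YoungDiagram} {k : ℕ} {T : SkewSYT mu lam}

lemma SYT_ext {T U : SkewSYT mu lam} (h : ∀ c, T.entry c = U.entry c) : T = U := by
  cases T; cases U
  simp only [SkewSYT.mk.injEq]
  exact funext h

lemma T_inj (T : SkewSYT mu lam) {c d : ℕ × ℕ} (hc : c ∈ skewCells mu lam)
    (hd : d ∈ skewCells mu lam) (h : T.entry c = T.entry d) : c = d := by
  have h1 := T.mem c hc
  obtain ⟨e, _, hu⟩ := T.bij (T.entry c) h1.1 h1.2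
  rw [hu c ⟨hc, rfl⟩, hu d ⟨hd, h.symm⟩]

lemma count_between (T : SkewSYT mu lam) {a v : ℕ} (hv : v ≤ skewSize mu lam + 1) :
    ((skewCells mu lam).filter (fun d => a < T.entry d ∧ T.entry d < v)).card = v - 1 - a := by
  have h := Finset.card_bij
    (s := (skewCells mu lam).filter (fun d => a < T.entry d ∧ T.entry d < v))
    (t := Finset.Icc (a+1) (v-1)) (fun d _ => T.entry d) ?_ ?_ ?_
  · rw [h, Nat.card_Icc]
    omega
  · intro d hd
    obtain ⟨hd1, hd2, hd3⟩ := Finset.mem_filter.1 hd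
    show T.entry d ∈ Finset.Icc (a+1) (v-1)
    rw [Finset.mem_Icc]
    omega
  · intro c hc d hd h
    exact T_inj T (Finset.mem_filter.1 hc).1 (Finset.mem_filter.1 hd).1 h
  · intro u hu
    obtain ⟨hu1, hu2⟩ := Finset.mem_Icc.1 hu
    obtain ⟨c, ⟨hcS, hce⟩, -⟩ := T.bij u (by omega) (by omega)
    exact ⟨c, Finset.mem_filter.2 ⟨hcS, by omega, by omega⟩, hce⟩

lemma count_lt (T : SkewSYT mu lam) {v : ℕ} (hv : v ≤ skewSize mu lam + 1) :
    ((skewCells mu lam).filter (fun d => T.entry d < v)).card = v - 1 := by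
  have h : (skewCells mu lam).filter (fun d => T.entry d < v)
      = (skewCells mu lam).filter (fun d => 0 < T.entry d ∧ T.entry d < v) := by
    apply Finset.filter_congr
    intro c hc
    have := (T.mem c hc).1
    constructor
    · intro h'; exact ⟨by omega, h'⟩
    · intro h'; exact h'.2
  have h2 := count_between (a := 0) T hv
  rw [h, h2]
  omega

def ATset (mu lam : YoungDiagram) (k : ℕ) (T : SkewSYT mu lam) : Finset (ℕ × ℕ) :=
  (skewCells mu lam).filter (fun c => T.entry c < k)

def BTset (mu lam : YoungDiagram) (k : ℕ) (T : SkewSYT mu lam) : Finset (ℕ × ℕ) :=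
  (skewCells mu lam).filter (fun c => k < T.entry c)

def SelOf (mu lam : YoungDiagram) (k : ℕ) (T : SkewSYT mu lam) : Finset (ℕ × ℕ) :=
  ((Eset mu lam).erase (c0 mu lam)).filter (fun c => T.entry c < k)

lemma SelOf_sub : SelOf mu lam k T ⊆ (Eset mu lam).erase (c0 mu lam) :=
  Finset.filter_subset _ _

lemma T_c0 (hne : (skewCells mu lam).Nonempty) (hT : HasKNE T k) :
    T.entry (c0 mu lam) = k := by
  have hm := c0_mem hne
  refine hT.1 (topRow mu lam) (lam.rowLen (topRow mu lam) - 1) hm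
    (fun c hc => topRow_le hc) (fun j' hj' => ?_)
  rw [mem_skew] at hj'
  omega

lemma H_sub_AT (hne : (skewCells mu lam).Nonempty) (hT : HasKNE T k) :
    Hset mu lam ⊆ ATset mu lam k T := by
  intro c hc
  obtain ⟨hcS, hcr⟩ := Finset.mem_filter.1 hc
  refine Finset.mem_filter.2 ⟨hcS, ?_⟩
  have hlt : T.entry c < T.entry (c.1, c.2 + 1) := by
    have := T.rowStrict c.1 c.2 (by rwa [show (c.1, c.2) = c from rfl]) hcr
    rwa [show (c.1, c.2) = c from rfl] at this
  rcases lt_trichotomy (T.entry c) k with h | h | h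
  · exact h
  · exfalso
    have : c = c0 mu lam := T_inj T hcS (c0_mem hne) (by rw [h, T_c0 hne hT])
    rw [this] at hc
    exact c0_not_H hne hc
  · exfalso
    have := hT.2.2 c hcS (c.1, c.2 + 1) hcr h hlt
    omega

lemma AT_sub_NV (hT : HasKNE T k) : ATset mu lam k T ⊆ NVset mu lam := by
  intro c hc
  obtain ⟨hcS, hck⟩ := Finset.mem_filter.1 hc
  refine Finset.mem_filter.2 ⟨hcS, fun i' hi' hmem => ?_⟩
  have hlt : T.entry (i', c.2) < T.entry c := by
    have := T.colStrict i' c.2 hmem (by rw [hi', show (c.1, c.2) = c from rfl]; exact hcS)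
    rwa [hi', show (c.1, c.2) = c from rfl] at this
  have := hT.2.1 (i', c.2) hmem c hcS hlt hck
  simp only at this
  omega

lemma c0_not_AT (hne : (skewCells mu lam).Nonempty) (hT : HasKNE T k) :
    c0 mu lam ∉ ATset mu lam k T := by
  intro h
  have := (Finset.mem_filter.1 h).2
  rw [T_c0 hne hT] at this
  omega

lemma AT_eq (hbr : IsBrokenRibbon mu lam) (hne : (skewCells mu lam).Nonempty)
    (hT : HasKNE T k) : ATset mu lam k T = Hset mu lam ∪ SelOf mu lam k T := by
  ext c
  constructor
  · intro hc
    have hNV := AT_sub_NV hT hc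
    rw [NVset_eq hbr] at hNV
    rcases Finset.mem_union.1 hNV with h | h
    · refine Finset.mem_union.2 (Or.inr (Finset.mem_filter.2 ⟨Finset.mem_erase.2 ⟨?_, h⟩,
        (Finset.mem_filter.1 hc).2⟩))
      intro heq
      exact c0_not_AT hne hT (heq ▸ hc)
    · exact Finset.mem_union.2 (Or.inl h)
  · intro hc
    rcases Finset.mem_union.1 hc with h | h
    · exact H_sub_AT hne hT h
    · obtain ⟨h1, h2⟩ := Finset.mem_filter.1 h
      exact Finset.mem_filter.2 ⟨E_sub (Finset.mem_of_mem_erase h1), h2⟩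

lemma SelOf_card (hbr : IsBrokenRibbon mu lam) (hne : (skewCells mu lam).Nonempty)
    (hT : HasKNE T k) (hk1 : 1 ≤ k) (hkr : k ≤ skewSize mu lam) :
    (SelOf mu lam k T).card + (Hset mu lam).card = k - 1 := by
  have h1 : (ATset mu lam k T).card = k - 1 := count_lt T (by omega)
  rw [AT_eq hbr hne hT, Finset.card_union_of_disjoint] at h1
  · omega
  · rw [Finset.disjoint_left]
    intro c hc hc'
    exact E_H_disj (Finset.mem_of_mem_erase (SelOf_sub hc')) hc

lemma BT_eq (hbr : IsBrokenRibbon mu lam) (hne : (skewCells mu lam).Nonempty)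
    (hT : HasKNE T k) : Bset mu lam (SelOf mu lam k T) = BTset mu lam k T := by
  have hA : Aset mu lam (SelOf mu lam k T) = ATset mu lam k T := (AT_eq hbr hne hT).symm
  ext c
  rw [mem_B, hA]
  simp only [BTset, ATset, Finset.mem_filter]
  constructor
  · rintro ⟨hcS, hcA, hc0⟩
    refine ⟨hcS, ?_⟩
    have h1 : ¬ T.entry c < k := fun h => hcA ⟨hcS, h⟩
    have h2 : T.entry c ≠ k := fun h => hc0 (T_inj T hcS (c0_mem hne) (by rw [h, T_c0 hne hT]))
    omega
  · rintro ⟨hcS, hck⟩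
    refine ⟨hcS, fun h => by have := h.2; omega, fun h => ?_⟩
    rw [h, T_c0 hne hT] at hck
    omega

lemma AT_filter_eq (hT : HasKNE T k) {c : ℕ × ℕ} (hc : c ∈ ATset mu lam k T) :
    (ATset mu lam k T).filter (fun d => d.2 < c.2)
      = (skewCells mu lam).filter (fun d => T.entry d < T.entry c) := by
  obtain ⟨hcS, hck⟩ := Finset.mem_filter.1 hc
  ext d
  simp only [ATset, Finset.mem_filter]
  constructor
  · rintro ⟨⟨hdS, hdk⟩, hcol⟩
    refine ⟨hdS, ?_⟩
    have hne' : T.entry d ≠ T.entry c := fun h => by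
      have := T_inj T hdS hcS h
      rw [this] at hcol
      omega
    have : ¬ T.entry c < T.entry d := fun h => by
      have := hT.2.1 c hcS d hdS h hdk
      omega
    omega
  · rintro ⟨hdS, hlt⟩
    exact ⟨⟨hdS, by omega⟩, hT.2.1 d hdS c hcS hlt hck⟩

lemma T_entry_A (hT : HasKNE T k) {c : ℕ × ℕ} (hc : c ∈ ATset mu lam k T) :
    T.entry c = rk (ATset mu lam k T) Prod.snd c + 1 := by
  obtain ⟨hcS, -⟩ := Finset.mem_filter.1 hc
  have h1 : rk (ATset mu lam k T) Prod.snd c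
      = ((skewCells mu lam).filter (fun d => T.entry d < T.entry c)).card := by
    rw [rk]
    exact congrArg Finset.card (AT_filter_eq hT hc)
  have h2 := count_lt T (v := T.entry c) (by have := (T.mem c hcS).2; omega)
  have h3 := (T.mem c hcS).1
  omega

lemma BT_filter_eq (hT : HasKNE T k) {c : ℕ × ℕ} (hc : c ∈ BTset mu lam k T) :
    (BTset mu lam k T).filter (fun d => d.1 < c.1)
      = (skewCells mu lam).filter (fun d => k < T.entry d ∧ T.entry d < T.entry c) := by
  obtain ⟨hcS, hck⟩ := Finset.mem_filter.1 hc
  ext d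
  simp only [BTset, Finset.mem_filter]
  constructor
  · rintro ⟨⟨hdS, hdk⟩, hrow⟩
    refine ⟨hdS, hdk, ?_⟩
    have hne' : T.entry d ≠ T.entry c := fun h => by
      have := T_inj T hdS hcS h
      rw [this] at hrow
      omega
    have : ¬ T.entry c < T.entry d := fun h => by
      have := hT.2.2 c hcS d hdS hck h
      omega
    omega
  · rintro ⟨hdS, hdk, hlt⟩
    exact ⟨⟨hdS, hdk⟩, hT.2.2 d hdS c hcS hdk hlt⟩

lemma T_entry_B (hT : HasKNE T k) {c : ℕ × ℕ} (hc : c ∈ BTset mu lam k T) :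
    T.entry c = k + 1 + rk (BTset mu lam k T) Prod.fst c := by
  obtain ⟨hcS, hck⟩ := Finset.mem_filter.1 hc
  have h1 : rk (BTset mu lam k T) Prod.fst c
      = ((skewCells mu lam).filter (fun d => k < T.entry d ∧ T.entry d < T.entry c)).card := by
    rw [rk]
    exact congrArg Finset.card (BT_filter_eq hT hc)
  have h2 := count_between (a := k) T (v := T.entry c) (by have := (T.mem c hcS).2; omega)
  omega

lemma roundtrip2 (hbr : IsBrokenRibbon mu lam) (hne : (skewCells mu lam).Nonempty)
    (hT : HasKNE T k) (hk1 : 1 ≤ k) (hkr : k ≤ skewSize mu lam) :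
    consT hbr hne (SelOf_sub (T := T)) (SelOf_card hbr hne hT hk1 hkr) hk1 hkr = T := by
  apply SYT_ext
  intro c
  show entryOf mu lam k (SelOf mu lam k T) c = T.entry c
  have hA : Aset mu lam (SelOf mu lam k T) = ATset mu lam k T := (AT_eq hbr hne hT).symm
  have hB : Bset mu lam (SelOf mu lam k T) = BTset mu lam k T := BT_eq hbr hne hT
  by_cases hcS : c ∈ skewCells mu lam
  · rcases lt_trichotomy (T.entry c) k with h | h | h
    · have hcA : c ∈ ATset mu lam k T := Finset.mem_filter.2 ⟨hcS, h⟩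
      rw [entryOf, hA, if_pos hcA]
      exact (T_entry_A hT hcA).symm
    · have hcc : c = c0 mu lam := T_inj T hcS (c0_mem hne) (by rw [h, T_c0 hne hT])
      rw [entryOf, hA, if_neg (hcc ▸ c0_not_AT hne hT), if_pos hcc, hcc, T_c0 hne hT]
    · have hcB : c ∈ BTset mu lam k T := Finset.mem_filter.2 ⟨hcS, h⟩
      have hcnA : c ∉ ATset mu lam k T := by
        intro h'
        have := (Finset.mem_filter.1 h').2
        omega
      have hcn0 : c ≠ c0 mu lam := by
        intro h'
        rw [h', T_c0 hne hT] at h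
        omega
      rw [entryOf, hA, if_neg hcnA, if_neg hcn0, if_pos hcS, hB]
      exact (T_entry_B hT hcB).symm
  · rw [T.zeros c hcS, entryOf, hA,
      if_neg (show c ∉ ATset mu lam k T from fun h => hcS (Finset.mem_filter.1 h).1),
      if_neg (show ¬ c = c0 mu lam from fun h => hcS (by rw [h]; exact c0_mem hne)),
      if_neg hcS]

lemma roundtrip1 {Sel : Finset (ℕ × ℕ)} (hbr : IsBrokenRibbon mu lam)
    (hne : (skewCells mu lam).Nonempty) (hSel : Sel ⊆ (Eset mu lam).erase (c0 mu lam))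
    (hcard : Sel.card + (Hset mu lam).card = k - 1) (hk1 : 1 ≤ k)
    (hkr : k ≤ skewSize mu lam) :
    SelOf mu lam k (consT hbr hne hSel hcard hk1 hkr) = Sel := by
  have hE : (consT hbr hne hSel hcard hk1 hkr).entry = entryOf mu lam k Sel := rfl
  ext c
  simp only [SelOf, Finset.mem_filter, hE]
  constructor
  · rintro ⟨hcE, hlt⟩
    have hcS : c ∈ skewCells mu lam := E_sub (Finset.mem_of_mem_erase hcE)
    have hcA : c ∈ Aset mu lam Sel := by
      rcases partitionS (hSel := hSel) hcS with h | h | h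
      · exact h
      · exact absurd h (Finset.mem_erase.1 hcE).1
      · have := (entry_B_bounds hk1 hkr hne hSel hcard h).1
        omega
    rcases Finset.mem_union.1 hcA with h | h
    · exact absurd h (fun h' => E_H_disj (Finset.mem_of_mem_erase hcE) h')
    · exact h
  · intro hcSel
    have hcA : c ∈ Aset mu lam Sel := Finset.mem_union.2 (Or.inr hcSel)
    refine ⟨hSel hcSel, ?_⟩
    have := entry_A_le hSel hcard hcA
    omega

/-- the main bijection -/
noncomputable def mainEquiv (hbr : IsBrokenRibbon mu lam) (hne : (skewCells mu lam).Nonempty)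
    (hk1 : 1 ≤ k) (hkr : k ≤ skewSize mu lam) :
    {T : SkewSYT mu lam // HasKNE T k} ≃
    {Sel : Finset (ℕ × ℕ) // Sel ⊆ (Eset mu lam).erase (c0 mu lam) ∧
      Sel.card + (Hset mu lam).card = k - 1} where
  toFun T := ⟨SelOf mu lam k T.1, SelOf_sub, SelOf_card hbr hne T.2 hk1 hkr⟩
  invFun Sel := ⟨consT hbr hne Sel.2.1 Sel.2.2 hk1 hkr,
    consT_KNE hbr hne Sel.2.1 Sel.2.2 hk1 hkr⟩
  left_inv T := Subtype.ext (roundtrip2 hbr hne T.2 hk1 hkr)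
  right_inv Sel := Subtype.ext (roundtrip1 hbr hne Sel.2.1 Sel.2.2 hk1 hkr)

end Forward

lemma count_subsets (E' : Finset (ℕ × ℕ)) (w t : ℕ) :
    Nat.card {Sel : Finset (ℕ × ℕ) // Sel ⊆ E' ∧ Sel.card + w = t} =
      if w ≤ t then (E'.card).choose (t - w) else 0 := by
  split
  · next h =>
    have e : {Sel : Finset (ℕ × ℕ) // Sel ⊆ E' ∧ Sel.card + w = t} ≃
        {Sel : Finset (ℕ × ℕ) // Sel ∈ E'.powersetCard (t - w)} :=
      { toFun := fun S => ⟨S.1, Finset.mem_powersetCard.2 ⟨S.2.1, by have := S.2.2; omega⟩⟩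
        invFun := fun S => ⟨S.1, (Finset.mem_powersetCard.1 S.2).1,
          by have := (Finset.mem_powersetCard.1 S.2).2; omega⟩
        left_inv := fun S => rfl
        right_inv := fun S => rfl }
    rw [Nat.card_congr e, Nat.card_eq_finsetCard, Finset.card_powersetCard]
  · next h =>
    have : IsEmpty {Sel : Finset (ℕ × ℕ) // Sel ⊆ E' ∧ Sel.card + w = t} :=
      ⟨fun S => by have := S.2.2; omega⟩
    exact Nat.card_of_isEmpty

end KNE

/-- **Counting k-NE tableaux on a broken ribbon.** -/
theorem count_kNE_tableaux
    (mu lam : YoungDiagram) (hml : mu ≤ lam) (hbr : IsBrokenRibbon mu lam)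
    (r : ℕ) (hsize : skewSize mu lam = r) (hr : 1 ≤ r) (k : ℕ) (hk1 : 1 ≤ k) (hk2 : k ≤ r) :
    Nat.card {T : SkewSYT mu lam // HasKNE T k} =
      if wt mu lam ≤ k - 1 then Nat.choose (rib mu lam - 1) (k - 1 - wt mu lam) else 0 := by
  have h0 : (skewCells mu lam).card = r := hsize
  have hne : (skewCells mu lam).Nonempty := Finset.card_pos.mp (by omega)
  have hkr : k ≤ skewSize mu lam := by rw [hsize]; exact hk2
  rw [Nat.card_congr (KNE.mainEquiv hbr hne hk1 hkr)]
  rw [KNE.count_subsets, KNE.rib_eq, KNE.wt_eq hbr]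
  rw [Finset.card_erase_of_mem (KNE.c0_E hne)]
end
end
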